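/- arXiv:2602.03058 — 8 statements merged into one kernel-verified Lean document; each statement's English description precedes it below -/
import Mathlib

section
/- For every nonnegative integer ℓ, every integer n ≥ 1, and all real numbers x_1, ..., x_n, the complete homogeneous symmetric polynomial admits the probabilistic representation h_ℓ(x_1, ..., x_n) = (1/ℓ!) · E[(Σ_{j=1}^n x_j·𝓔_j)^ℓ], where 𝓔_1, ..., 𝓔_n are i.i.d. standard exponential random variables. -/
open MeasureTheory ProbabilityTheory

open scoped Classical in
/-- The complete homogeneous symmetric polynomial of degree `ℓ` in `n` real variables:
the sum of all distinct degree-`ℓ` monomials, indexed by monotone tuples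
`j₁ ≤ j₂ ≤ ⋯ ≤ j_ℓ`. -/
noncomputable def chs (n ℓ : ℕ) (x : Fin n → ℝ) : ℝ :=
  ∑ f ∈ Finset.univ.filter (fun f : Fin ℓ → Fin n => Monotone f), ∏ i, x (f i)

section Aux

open Real Set Equiv
open scoped ENNReal NNReal

/-! ### Moments of the standard exponential distribution -/

lemma chsAux.gammaPDFReal_one_one (x : ℝ) :
    gammaPDFReal 1 1 x = if 0 ≤ x then Real.exp (-x) else 0 := by
  simp [gammaPDFReal, Real.rpow_zero]

lemma chsAux.exp_moment_indicator (k : ℕ) :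
    (fun x : ℝ => ((gammaPDFReal 1 1 x).toNNReal : ℝ) • x ^ k)
      = (Ici (0:ℝ)).indicator (fun x => Real.exp (-x) * x ^ k) := by
  funext x
  rw [chsAux.gammaPDFReal_one_one]
  by_cases h : 0 ≤ x <;> simp [h, indicator, Real.exp_nonneg, max_eq_left, smul_eq_mul]

lemma chsAux.integrableOn_exp_mul_pow (k : ℕ) :
    IntegrableOn (fun x : ℝ => Real.exp (-x) * x ^ k) (Ici 0) := by
  rw [integrableOn_Ici_iff_integrableOn_Ioi]
  have h := Real.GammaIntegral_convergent (s := (k + 1 : ℝ)) (by positivity)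
  refine h.congr_fun (fun x hx => ?_) measurableSet_Ioi
  simp only [add_sub_cancel_right, Real.rpow_natCast]

lemma chsAux.expMeasure_eq : expMeasure 1
    = MeasureTheory.volume.withDensity (fun x => ((gammaPDFReal 1 1 x).toNNReal : ℝ≥0∞)) := rfl

lemma chsAux.exp_moment_integrable (k : ℕ) :
    Integrable (fun x : ℝ => x ^ k) (expMeasure 1) := by
  rw [chsAux.expMeasure_eq, integrable_withDensity_iff_integrable_coe_smul₀
    ((measurable_gammaPDFReal 1 1).real_toNNReal).aemeasurable]
  rw [show (fun x : ℝ => ((gammaPDFReal 1 1 x).toNNReal : ℝ) • x ^ k)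
      = (Ici (0:ℝ)).indicator (fun x => Real.exp (-x) * x ^ k) from
    chsAux.exp_moment_indicator k]
  rw [integrable_indicator_iff measurableSet_Ici]
  exact chsAux.integrableOn_exp_mul_pow k

lemma chsAux.exp_moment (k : ℕ) :
    ∫ x, x ^ k ∂(expMeasure 1) = (Nat.factorial k : ℝ) := by
  rw [chsAux.expMeasure_eq, integral_withDensity_eq_integral_smul₀
    ((measurable_gammaPDFReal 1 1).real_toNNReal).aemeasurable]
  have h1 : (fun x : ℝ => ((gammaPDFReal 1 1 x).toNNReal : ℝ≥0) • x ^ k)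
      = (Ici (0:ℝ)).indicator (fun x => Real.exp (-x) * x ^ k) := by
    rw [← chsAux.exp_moment_indicator k]; rfl
  rw [h1, integral_indicator measurableSet_Ici, integral_Ici_eq_integral_Ioi]
  have h2 : ∫ x in Ioi (0:ℝ), Real.exp (-x) * x ^ k
      = ∫ x in Ioi (0:ℝ), Real.exp (-x) * x ^ ((k + 1 : ℝ) - 1) := by
    refine setIntegral_congr_fun measurableSet_Ioi (fun x hx => ?_)
    rw [add_sub_cancel_right, Real.rpow_natCast]
  rw [h2, ← Real.Gamma_eq_integral (by positivity)]
  exact_mod_cast Real.Gamma_nat_eq_factorial k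

/-! ### Moments of products of independent exponentials -/

variable {Ω : Type*} [MeasurableSpace Ω] (μ : Measure Ω) [IsProbabilityMeasure μ]
  {n : ℕ} {E : Fin n → Ω → ℝ}

omit [IsProbabilityMeasure μ] in
lemma chsAux.pow_E_integrable (hmeas : ∀ j, Measurable (E j))
    (hlaw : ∀ j, Measure.map (E j) μ = expMeasure 1) (j : Fin n) (k : ℕ) :
    Integrable (fun ω => E j ω ^ k) μ := by
  have h := chsAux.exp_moment_integrable k
  rw [← hlaw j] at h
  rw [integrable_map_measure (by fun_prop) (hmeas j).aemeasurable] at h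
  exact h

omit [IsProbabilityMeasure μ] in
lemma chsAux.pow_E_integral (hmeas : ∀ j, Measurable (E j))
    (hlaw : ∀ j, Measure.map (E j) μ = expMeasure 1) (j : Fin n) (k : ℕ) :
    ∫ ω, E j ω ^ k ∂μ = (Nat.factorial k : ℝ) := by
  have h : ∫ y, (fun x : ℝ => x ^ k) y ∂(Measure.map (E j) μ) = ∫ ω, E j ω ^ k ∂μ :=
    integral_map (hmeas j).aemeasurable ((measurable_id.pow_const k).aestronglyMeasurable)
  rw [hlaw j, chsAux.exp_moment k] at h
  exact h.symm

lemma chsAux.prod_pow_E (hmeas : ∀ j, Measurable (E j))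
    (hindep : iIndepFun E μ)
    (hlaw : ∀ j, Measure.map (E j) μ = expMeasure 1) (c : Fin n → ℕ) (s : Finset (Fin n)) :
    Integrable (fun ω => ∏ j ∈ s, E j ω ^ c j) μ ∧
      ∫ ω, ∏ j ∈ s, E j ω ^ c j ∂μ = ∏ j ∈ s, (Nat.factorial (c j) : ℝ) := by
  classical
  have hY : iIndepFun (fun j ω => E j ω ^ c j) μ :=
    hindep.comp (fun j => (·  ^ c j)) (fun j => by fun_prop)
  induction s using Finset.induction with
  | empty => simp
  | insert j s hj ih =>
    have hInd : IndepFun (∏ j' ∈ s, fun ω => E j' ω ^ c j') (fun ω => E j ω ^ c j) μ :=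
      hY.indepFun_finsetProd_of_notMem (fun j' => by fun_prop) hj
    have hprodeq : (∏ j' ∈ s, fun ω => E j' ω ^ c j') = fun ω => ∏ j' ∈ s, E j' ω ^ c j' := by
      funext ω; simp [Finset.prod_apply]
    rw [hprodeq] at hInd
    have hint : Integrable (fun ω => (∏ j' ∈ s, E j' ω ^ c j') * E j ω ^ c j) μ :=
      hInd.integrable_mul ih.1 (chsAux.pow_E_integrable μ hmeas hlaw j (c j))
    have hsplit : (fun ω => ∏ j' ∈ insert j s, E j' ω ^ c j')
        = fun ω => (∏ j' ∈ s, E j' ω ^ c j') * E j ω ^ c j := by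
      funext ω; rw [Finset.prod_insert hj, mul_comm]
    constructor
    · rw [hsplit]; exact hint
    · rw [hsplit]
      have hmul : ∫ ω, (∏ j' ∈ s, E j' ω ^ c j') * E j ω ^ c j ∂μ
          = (∫ ω, ∏ j' ∈ s, E j' ω ^ c j' ∂μ) * ∫ ω, E j ω ^ c j ∂μ :=
        hInd.integral_mul_eq_mul_integral ih.1.aestronglyMeasurable
          (chsAux.pow_E_integrable μ hmeas hlaw j (c j)).aestronglyMeasurable
      rw [hmul, ih.2, Finset.prod_insert hj, chsAux.pow_E_integral μ hmeas hlaw j (c j),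
        mul_comm]

/-! ### Combinatorics -/

lemma chsAux.card_lemma {n ℓ : ℕ} (f : Fin ℓ → Fin n)
    [DecidablePred (fun σ : Perm (Fin ℓ) => Monotone (f ∘ σ))] :
    ∏ j : Fin n, Nat.factorial ((Finset.univ.filter fun i => f i = j).card)
      = (Finset.univ.filter fun σ : Perm (Fin ℓ) => Monotone (f ∘ σ)).card := by
  classical
  have h1 := DomMulAct.stabilizer_card f
  have h2 : Fintype.card {σ : Perm (Fin ℓ) // f ∘ σ = f}
      = (Finset.univ.filter fun σ : Perm (Fin ℓ) => f ∘ σ = f).card :=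
    Fintype.card_subtype _
  have h3 : ∀ j, Fintype.card {i // f i = j} = (Finset.univ.filter fun i => f i = j).card :=
    fun j => Fintype.card_subtype _
  have hbij : (Finset.univ.filter fun σ : Perm (Fin ℓ) => f ∘ σ = f).card
      = (Finset.univ.filter fun σ : Perm (Fin ℓ) => Monotone (f ∘ σ)).card := by
    apply Finset.card_bij (fun σ _ => σ * Tuple.sort f)
    · intro σ hσ
      simp only [Finset.mem_filter, Finset.mem_univ, true_and] at hσ ⊢
      have : f ∘ ⇑(σ * Tuple.sort f) = (f ∘ ⇑σ) ∘ ⇑(Tuple.sort f) := rfl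
      rw [this, hσ]
      exact Tuple.monotone_sort f
    · intro σ₁ _ σ₂ _ h
      exact mul_right_cancel h
    · intro τ hτ
      simp only [Finset.mem_filter, Finset.mem_univ, true_and] at hτ
      refine ⟨τ * (Tuple.sort f)⁻¹, ?_, by group⟩
      simp only [Finset.mem_filter, Finset.mem_univ, true_and]
      have heq : f ∘ ⇑τ = f ∘ ⇑(Tuple.sort f) := Tuple.comp_sort_eq_comp_iff_monotone.mpr hτ
      have : f ∘ ⇑(τ * (Tuple.sort f)⁻¹) = (f ∘ ⇑τ) ∘ ⇑(Tuple.sort f)⁻¹ := rfl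
      rw [this, heq]
      funext i
      simp
  rw [← hbij, ← h2, h1]
  exact Finset.prod_congr rfl fun j _ => by rw [h3]

lemma chsAux.comb_lemma (n ℓ : ℕ) (x : Fin n → ℝ) :
    ∑ f : Fin ℓ → Fin n, (∏ i, x (f i))
        * ((Finset.univ.filter fun σ : Perm (Fin ℓ) => Monotone (f ∘ σ)).card : ℝ)
      = (Nat.factorial ℓ : ℝ) * chs n ℓ x := by
  classical
  have h1 : ∀ f : Fin ℓ → Fin n, (∏ i, x (f i))
        * ((Finset.univ.filter fun σ : Perm (Fin ℓ) => Monotone (f ∘ σ)).card : ℝ)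
      = ∑ σ : Perm (Fin ℓ), if Monotone (f ∘ σ) then ∏ i, x (f i) else 0 := by
    intro f
    rw [Finset.sum_ite, Finset.sum_const, Finset.sum_const, nsmul_eq_mul, nsmul_eq_mul]
    ring
  simp_rw [h1]
  rw [Finset.sum_comm]
  have h2 : ∀ σ : Perm (Fin ℓ),
      (∑ f : Fin ℓ → Fin n, if Monotone (f ∘ σ) then ∏ i, x (f i) else 0)
      = ∑ g : Fin ℓ → Fin n, if Monotone g then ∏ i, x (g i) else 0 := by
    intro σ
    apply Fintype.sum_bijective (fun f : Fin ℓ → Fin n => f ∘ σ)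
      ((Equiv.arrowCongr σ.symm (Equiv.refl (Fin n))).bijective)
    intro f
    have hw : ∏ i, x (f (σ i)) = ∏ i, x (f i) := Equiv.prod_comp σ (fun i => x (f i))
    by_cases h : Monotone (f ∘ σ) <;> simp [h, Function.comp, hw]
  simp_rw [h2]
  rw [Finset.sum_const, Finset.card_univ, Fintype.card_perm, Fintype.card_fin, nsmul_eq_mul]
  congr 1
  rw [chs, Finset.sum_filter]

end Aux

/-- **Probabilistic representation of CHS polynomials**:
`h_ℓ(x) = (1/ℓ!) E[(∑ x_j 𝓔_j)^ℓ]` for i.i.d. standard exponentials `𝓔_j`. -/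
theorem chs_eq_moment_sum_exponentials
    {Ω : Type*} [MeasurableSpace Ω] (μ : Measure Ω) [IsProbabilityMeasure μ]
    (ℓ : ℕ) (n : ℕ) (hn : 1 ≤ n) (x : Fin n → ℝ)
    (E : Fin n → Ω → ℝ) (hmeas : ∀ j, Measurable (E j))
    (hindep : iIndepFun E μ)
    (hlaw : ∀ j, Measure.map (E j) μ = expMeasure 1) :
    chs n ℓ x = (1 / (Nat.factorial ℓ : ℝ)) * ∫ ω, (∑ j, x j * E j ω) ^ ℓ ∂μ := by
  classical
  set c : (Fin ℓ → Fin n) → Fin n → ℕ :=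
    fun f j => (Finset.univ.filter fun i => f i = j).card with hc
  have hexpand : ∀ ω : Ω, (∑ j, x j * E j ω) ^ ℓ
      = ∑ f : Fin ℓ → Fin n, (∏ i, x (f i)) * ∏ j, E j ω ^ c f j := by
    intro ω
    have h0 : (∑ j, x j * E j ω) ^ ℓ = ∏ _i : Fin ℓ, ∑ j, x j * E j ω := by
      rw [Finset.prod_const, Finset.card_univ, Fintype.card_fin]
    rw [h0, Finset.prod_univ_sum]
    rw [Fintype.piFinset_univ]
    refine Finset.sum_congr rfl fun f _ => ?_
    rw [Finset.prod_mul_distrib]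
    congr 1
    rw [← Finset.prod_fiberwise_of_maps_to (fun i _ => Finset.mem_univ (f i))
      (fun i => E (f i) ω)]
    refine Finset.prod_congr rfl fun j _ => ?_
    rw [Finset.prod_congr rfl (fun i hi => ?_), Finset.prod_const]
    exact congrArg (fun r => E r ω) (Finset.mem_filter.mp hi).2
  have hint : ∀ f : Fin ℓ → Fin n,
      Integrable (fun ω => (∏ i, x (f i)) * ∏ j, E j ω ^ c f j) μ :=
    fun f => ((chsAux.prod_pow_E μ hmeas hindep hlaw (c f) Finset.univ).1).const_mul _
  have hI : ∫ ω, (∑ j, x j * E j ω) ^ ℓ ∂μ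
      = ∑ f : Fin ℓ → Fin n, (∏ i, x (f i)) * ∏ j, ((c f j).factorial : ℝ) := by
    calc ∫ ω, (∑ j, x j * E j ω) ^ ℓ ∂μ
        = ∫ ω, ∑ f : Fin ℓ → Fin n, (∏ i, x (f i)) * ∏ j, E j ω ^ c f j ∂μ := by
          simp_rw [hexpand]
      _ = ∑ f : Fin ℓ → Fin n, ∫ ω, (∏ i, x (f i)) * ∏ j, E j ω ^ c f j ∂μ :=
          integral_finset_sum _ (fun f _ => hint f)
      _ = ∑ f : Fin ℓ → Fin n, (∏ i, x (f i)) * ∏ j, ((c f j).factorial : ℝ) := by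
          refine Finset.sum_congr rfl fun f _ => ?_
          rw [integral_const_mul,
            (chsAux.prod_pow_E μ hmeas hindep hlaw (c f) Finset.univ).2]
  have hkey : ∑ f : Fin ℓ → Fin n, (∏ i, x (f i)) * ∏ j, ((c f j).factorial : ℝ)
      = (Nat.factorial ℓ : ℝ) * chs n ℓ x := by
    rw [← chsAux.comb_lemma n ℓ x]
    refine Finset.sum_congr rfl fun f _ => ?_
    congr 1
    rw [← Nat.cast_prod]
    exact_mod_cast congrArg (fun m : ℕ => (m : ℝ)) (chsAux.card_lemma f)
  rw [hI, hkey]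
  have hfac : (Nat.factorial ℓ : ℝ) ≠ 0 := Nat.cast_ne_zero.mpr (Nat.factorial_ne_zero ℓ)
  field_simp
end

section
/- Let Φ: ℝ → ℝ be continuously differentiable with |Φ(t)| = O(|t|^β) and |Φ'(t)| = O(|t|^β) for some β > 0. Let 𝓔, 𝓔_1, ..., 𝓔_n be i.i.d. standard exponential random variables, let x_1, ..., x_n, u be real numbers and S_x = Σ_{j=1}^n x_j·𝓔_j. Then E[Φ(S_x)] = E[Φ(S_x + u·𝓔)] − u·E[Φ'(S_x + u·𝓔)]. -/
open MeasureTheory ProbabilityTheory Filter Asymptotics Real Set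
open scoped ENNReal NNReal Topology

/-! ### Helpers about the exponential measure -/

lemma expIBP_pdfReal_eq (x : ℝ) :
    exponentialPDFReal 1 x = if 0 ≤ x then Real.exp (-x) else 0 := by
  simp [exponentialPDFReal, gammaPDFReal]

lemma expIBP_measure_eq :
    expMeasure 1 = volume.withDensity (fun x => ((exponentialPDFReal 1 x).toNNReal : ℝ≥0∞)) := rfl

lemma expIBP_integral (f : ℝ → ℝ) :
    ∫ t, f t ∂(expMeasure 1) = ∫ t in Ioi 0, f t * Real.exp (-t) := by
  rw [expIBP_measure_eq,
    integral_withDensity_eq_integral_smul ((measurable_exponentialPDFReal 1).real_toNNReal) f]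
  have : (fun x => (exponentialPDFReal 1 x).toNNReal • f x)
      = (Ici (0:ℝ)).indicator (fun x => f x * Real.exp (-x)) := by
    funext x
    rw [expIBP_pdfReal_eq, Set.indicator_apply]
    simp only [mem_Ici]
    split_ifs with h
    · rw [NNReal.smul_def, Real.coe_toNNReal _ (Real.exp_nonneg _), smul_eq_mul]; ring
    · simp
  rw [this, integral_indicator measurableSet_Ici, integral_Ici_eq_integral_Ioi]

lemma expIBP_integrable_iff (f : ℝ → ℝ) :
    Integrable f (expMeasure 1) ↔ IntegrableOn (fun t => f t * Real.exp (-t)) (Ioi 0) := by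
  have hmeas : Measurable (exponentialPDF 1) :=
    (measurable_exponentialPDFReal 1).ennreal_ofReal
  have : expMeasure 1 = volume.withDensity (exponentialPDF 1) := rfl
  rw [this, integrable_withDensity_iff hmeas (Eventually.of_forall fun _ => ENNReal.ofReal_lt_top)]
  have : (fun x => f x * (exponentialPDF 1 x).toReal)
      = (Ici (0:ℝ)).indicator (fun x => f x * Real.exp (-x)) := by
    funext x
    have : (exponentialPDF 1 x).toReal = exponentialPDFReal 1 x :=
      ENNReal.toReal_ofReal (exponentialPDFReal_nonneg one_pos x)
    simp only [this, expIBP_pdfReal_eq, Set.indicator_apply, mem_Ici]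
    split_ifs <;> ring
  rw [this, integrable_indicator_iff measurableSet_Ici,
    integrableOn_Ici_iff_integrableOn_Ioi]

/-! ### Integrability of polynomials against the exponential density -/

lemma expIBP_integrableOn_pow (k : ℕ) :
    IntegrableOn (fun t : ℝ => t ^ k * Real.exp (-t)) (Ioi 0) := by
  have h := Real.GammaIntegral_convergent (s := (k : ℝ) + 1) (by positivity)
  refine h.congr_fun (fun x hx => ?_) measurableSet_Ioi
  rw [add_sub_cancel_right]; dsimp only; rw [Real.rpow_natCast, mul_comm]

lemma expIBP_integrableOn_one_add_pow (m : ℕ) :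
    IntegrableOn (fun t : ℝ => (1 + t) ^ m * Real.exp (-t)) (Ioi 0) := by
  have h : (fun t : ℝ => (1 + t) ^ m * Real.exp (-t))
      = fun t => ∑ k ∈ Finset.range (m + 1),
          (m.choose k : ℝ) * (t ^ (m - k) * Real.exp (-t)) := by
    funext t
    rw [add_pow, Finset.sum_mul]
    refine Finset.sum_congr rfl fun k _ => by ring
  rw [h]
  exact integrable_finset_sum _ fun k _ => (expIBP_integrableOn_pow (m - k)).const_mul _

lemma expIBP_tendsto (m : ℕ) :
    Tendsto (fun t : ℝ => (1 + t) ^ m * Real.exp (-t)) atTop (𝓝 0) := by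
  have h1 : Tendsto (fun t : ℝ => 1 + t) atTop atTop :=
    tendsto_atTop_add_const_left _ _ tendsto_id
  have h2 := (tendsto_pow_mul_exp_neg_atTop_nhds_zero m).comp h1
  have h3 := h2.const_mul (Real.exp 1)
  rw [mul_zero] at h3
  refine h3.congr fun t => ?_
  simp only [Function.comp]
  rw [neg_add, Real.exp_add, Real.exp_neg]
  field_simp

/-! ### Pointwise growth facts -/

lemma expIBP_one_add_mul (s u t : ℝ) (ht : 0 ≤ t) :
    1 + |s + u * t| ≤ (1 + |s| + |u|) * (1 + t) := by
  have h1 : |s + u * t| ≤ |s| + |u| * t := by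
    calc |s + u * t| ≤ |s| + |u * t| := abs_add_le _ _
    _ = |s| + |u| * t := by rw [abs_mul, abs_of_nonneg ht]
  nlinarith [abs_nonneg s, abs_nonneg u]

/-- Integrability of `f (s + u t)` against the exponential density, for `f` continuous
of polynomial growth. -/
lemma expIBP_integrableOn_comp {f : ℝ → ℝ} (hf : Continuous f) {C : ℝ} {m : ℕ}
    (hb : ∀ t, |f t| ≤ C * (1 + |t|) ^ m) (s u : ℝ) :
    IntegrableOn (fun t => f (s + u * t) * Real.exp (-t)) (Ioi 0) := by
  have hC : 0 ≤ C := le_trans (abs_nonneg (f 0)) (by simpa using hb 0)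
  refine Integrable.mono' ((expIBP_integrableOn_one_add_pow m).const_mul
    (C * (1 + |s| + |u|) ^ m)) ?_ ?_
  · exact ((hf.comp (by continuity)).mul (by continuity)).aestronglyMeasurable
  · refine (ae_restrict_iff' measurableSet_Ioi).2 (Eventually.of_forall fun t ht => ?_)
    have ht0 : (0:ℝ) ≤ t := le_of_lt ht
    have h1 : |f (s + u * t)| ≤ C * ((1 + |s| + |u|) ^ m * (1 + t) ^ m) := by
      calc |f (s + u * t)| ≤ C * (1 + |s + u * t|) ^ m := hb _
      _ ≤ C * ((1 + |s| + |u|) * (1 + t)) ^ m := by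
          refine mul_le_mul_of_nonneg_left (pow_le_pow_left₀ (by positivity)
            (expIBP_one_add_mul s u t ht0) m) hC
      _ = C * ((1 + |s| + |u|) ^ m * (1 + t) ^ m) := by rw [mul_pow]
    calc ‖f (s + u * t) * Real.exp (-t)‖ = |f (s + u * t)| * Real.exp (-t) := by
          rw [norm_mul, Real.norm_eq_abs, Real.norm_eq_abs, abs_of_pos (Real.exp_pos _)]
    _ ≤ C * ((1 + |s| + |u|) ^ m * (1 + t) ^ m) * Real.exp (-t) :=
        mul_le_mul_of_nonneg_right h1 (Real.exp_pos _).le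
    _ = C * (1 + |s| + |u|) ^ m * ((1 + t) ^ m * Real.exp (-t)) := by ring

/-! ### The pointwise integration-by-parts identity -/

lemma expIBP_key {Φ : ℝ → ℝ} (hΦ : ContDiff ℝ 1 Φ) {C : ℝ} {m : ℕ}
    (hb : ∀ t, |Φ t| ≤ C * (1 + |t|) ^ m) (hb' : ∀ t, |deriv Φ t| ≤ C * (1 + |t|) ^ m)
    (u s : ℝ) :
    ∫ t in Ioi 0, (Φ (s + u * t) - u * deriv Φ (s + u * t)) * Real.exp (-t) = Φ s := by
  have hC : 0 ≤ C := le_trans (abs_nonneg (Φ 0)) (by simpa using hb 0)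
  have hΦd : Differentiable ℝ Φ := hΦ.differentiable one_ne_zero
  have hΦc : Continuous Φ := hΦ.continuous
  have hΦ'c : Continuous (deriv Φ) := hΦ.continuous_deriv le_rfl
  set F : ℝ → ℝ := fun t => -(Φ (s + u * t) * Real.exp (-t)) with hF
  have hFderiv : ∀ t : ℝ, HasDerivAt F
      ((Φ (s + u * t) - u * deriv Φ (s + u * t)) * Real.exp (-t)) t := by
    intro t
    have hin : HasDerivAt (fun t : ℝ => s + u * t) u t := by
      simpa using ((hasDerivAt_id t).const_mul u).const_add s
    have h1 : HasDerivAt (fun t : ℝ => Φ (s + u * t)) (deriv Φ (s + u * t) * u) t :=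
      (hΦd (s + u * t)).hasDerivAt.comp t hin
    have h2 : HasDerivAt (fun t : ℝ => Real.exp (-t)) (-Real.exp (-t)) t := by
      simpa [Function.comp_def] using (Real.hasDerivAt_exp (-t)).comp t (hasDerivAt_neg t)
    have : HasDerivAt F (-(deriv Φ (s + u * t) * u * Real.exp (-t) + Φ (s + u * t) * -Real.exp (-t))) t :=
      (h1.mul h2).neg
    convert this using 1
    ring
  have hFcont : ContinuousWithinAt F (Ici 0) 0 :=
    (((hΦc.comp (by continuity)).mul (by continuity)).neg).continuousWithinAt
  have hint : IntegrableOn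
      (fun t => (Φ (s + u * t) - u * deriv Φ (s + u * t)) * Real.exp (-t)) (Ioi 0) := by
    have h1 := expIBP_integrableOn_comp hΦc hb s u
    have h2 := (expIBP_integrableOn_comp hΦ'c hb' s u).const_mul u
    refine (h1.sub h2).congr (Eventually.of_forall fun t => ?_)
    simp only [Pi.sub_apply]
    ring
  have htend : Tendsto F atTop (𝓝 0) := by
    have ht0 := (expIBP_tendsto m).const_mul (C * (1 + |s| + |u|) ^ m)
    rw [mul_zero] at ht0
    refine squeeze_zero_norm' ?_ ht0
    filter_upwards [eventually_ge_atTop (0:ℝ)] with t ht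
    have h1 : |Φ (s + u * t)| ≤ C * ((1 + |s| + |u|) ^ m * (1 + t) ^ m) := by
      calc |Φ (s + u * t)| ≤ C * (1 + |s + u * t|) ^ m := hb _
      _ ≤ C * ((1 + |s| + |u|) * (1 + t)) ^ m :=
          mul_le_mul_of_nonneg_left (pow_le_pow_left₀ (by positivity)
            (expIBP_one_add_mul s u t ht) m) hC
      _ = C * ((1 + |s| + |u|) ^ m * (1 + t) ^ m) := by rw [mul_pow]
    calc ‖F t‖ = |Φ (s + u * t)| * Real.exp (-t) := by
          rw [hF]; rw [norm_neg, norm_mul, Real.norm_eq_abs, Real.norm_eq_abs,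
            abs_of_pos (Real.exp_pos _)]
    _ ≤ C * ((1 + |s| + |u|) ^ m * (1 + t) ^ m) * Real.exp (-t) :=
        mul_le_mul_of_nonneg_right h1 (Real.exp_pos _).le
    _ = C * (1 + |s| + |u|) ^ m * ((1 + t) ^ m * Real.exp (-t)) := by ring
  have := integral_Ioi_of_hasDerivAt_of_tendsto hFcont (fun t _ => hFderiv t) hint htend
  rw [this, hF]
  simp

/-! ### Global polynomial bound from a `cocompact` big-O estimate -/

lemma expIBP_growth {f : ℝ → ℝ} (hf : Continuous f) {β : ℝ} (hβ : 0 < β)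
    (hO : f =O[cocompact ℝ] fun t => |t| ^ β) {m : ℕ} (hm : β ≤ m) :
    ∃ C : ℝ, 0 ≤ C ∧ ∀ t, |f t| ≤ C * (1 + |t|) ^ m := by
  obtain ⟨c, hc⟩ := hO.isBigOWith
  rw [isBigOWith_iff, cocompact_eq_atBot_atTop, eventually_sup, eventually_atBot,
    eventually_atTop] at hc
  obtain ⟨⟨a, ha⟩, b, hbb⟩ := hc
  obtain ⟨M, hM⟩ := (isCompact_Icc (a := min a 0) (b := max b 0)).exists_bound_of_continuousOn
    hf.continuousOn
  refine ⟨max c 0 + max M 0, by positivity, fun t => ?_⟩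
  have h0t : (0:ℝ) ≤ |t| := abs_nonneg t
  have hpow1 : (1:ℝ) ≤ (1 + |t|) ^ m := one_le_pow₀ (by linarith)
  have hkey : |t| ^ β ≤ (1 + |t|) ^ m := by
    calc |t| ^ β ≤ (1 + |t|) ^ β := Real.rpow_le_rpow h0t (by linarith) hβ.le
    _ ≤ (1 + |t|) ^ (m : ℝ) := Real.rpow_le_rpow_of_exponent_le (by linarith) hm
    _ = (1 + |t|) ^ m := Real.rpow_natCast _ m
  by_cases hcase : t ≤ a ∨ b ≤ t
  · have h1 : ‖f t‖ ≤ c * ‖|t| ^ β‖ := hcase.elim (ha t) (hbb t)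
    rw [Real.norm_eq_abs, Real.norm_eq_abs,
      abs_of_nonneg (Real.rpow_nonneg h0t β)] at h1
    have hrp : (0:ℝ) ≤ |t| ^ β := Real.rpow_nonneg h0t β
    calc |f t| ≤ c * |t| ^ β := h1
    _ ≤ max c 0 * (1 + |t|) ^ m := by
        refine le_trans (mul_le_mul_of_nonneg_right (le_max_left c 0) hrp) ?_
        exact mul_le_mul_of_nonneg_left hkey (le_max_right c 0)
    _ ≤ (max c 0 + max M 0) * (1 + |t|) ^ m := by
        have : (0:ℝ) ≤ max M 0 := le_max_right M 0
        nlinarith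
  · push_neg at hcase
    have ht : t ∈ Icc (min a 0) (max b 0) :=
      ⟨le_trans (min_le_left a 0) hcase.1.le, le_trans hcase.2.le (le_max_left b 0)⟩
    calc |f t| ≤ M := by rw [← Real.norm_eq_abs]; exact hM t ht
    _ ≤ (max c 0 + max M 0) * 1 := by
        rw [mul_one]
        have : (0:ℝ) ≤ max c 0 := le_max_right c 0
        have h2 : M ≤ max M 0 := le_max_left M 0
        linarith
    _ ≤ (max c 0 + max M 0) * (1 + |t|) ^ m :=
        mul_le_mul_of_nonneg_left hpow1 (by positivity)

lemma expIBP_one_add_pow {A : ℝ} (hA : 0 ≤ A) (m : ℕ) :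
    (1 + A) ^ m ≤ 2 ^ m * (1 + A ^ m) := by
  have h2 : (0:ℝ) < 2 ^ m := by positivity
  have hAm : 0 ≤ A ^ m := pow_nonneg hA m
  rcases le_total A 1 with h | h
  · calc (1 + A) ^ m ≤ 2 ^ m := pow_le_pow_left₀ (by linarith) (by linarith) m
    _ ≤ 2 ^ m * (1 + A ^ m) := by nlinarith
  · calc (1 + A) ^ m ≤ (2 * A) ^ m := pow_le_pow_left₀ (by linarith) (by linarith) m
    _ = 2 ^ m * A ^ m := mul_pow 2 A m
    _ ≤ 2 ^ m * (1 + A ^ m) := by nlinarith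

lemma expIBP_sum_pow {ι : Type*} {s : Finset ι} {a : ι → ℝ} (ha : ∀ i ∈ s, 0 ≤ a i) (k : ℕ) :
    (∑ i ∈ s, a i) ^ (k + 1) ≤ (s.card : ℝ) ^ (k + 1) * ∑ i ∈ s, a i ^ (k + 1) := by
  rcases s.eq_empty_or_nonempty with rfl | hne
  · simp
  · have hcard1 : (1:ℝ) ≤ (s.card : ℝ) := by exact_mod_cast hne.card_pos
    have hcard0 : (0:ℝ) < (s.card : ℝ) := by linarith
    have h := pow_sum_div_card_le_sum_pow (f := a) ha k
    rw [div_le_iff₀ (by positivity)] at h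
    have hsum : 0 ≤ ∑ i ∈ s, a i ^ (k + 1) :=
      Finset.sum_nonneg fun i hi => pow_nonneg (ha i hi) _
    have hpow : ((s.card : ℝ)) ^ k ≤ ((s.card : ℝ)) ^ (k + 1) :=
      pow_le_pow_right₀ hcard1 (Nat.le_succ k)
    calc (∑ i ∈ s, a i) ^ (k + 1) ≤ (∑ i ∈ s, a i ^ (k + 1)) * (s.card : ℝ) ^ k := h
    _ ≤ (∑ i ∈ s, a i ^ (k + 1)) * (s.card : ℝ) ^ (k + 1) :=
        mul_le_mul_of_nonneg_left hpow hsum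
    _ = (s.card : ℝ) ^ (k + 1) * ∑ i ∈ s, a i ^ (k + 1) := mul_comm _ _


/-- **Integration-by-parts formula for the exponential distribution** (Lemma 2.1):
for `Φ` a `C¹` function of moderate growth, i.i.d. standard exponentials
`𝓔₁, …, 𝓔ₙ, 𝓔` and `S_x = ∑ x_j 𝓔_j`, one has
`E Φ(S_x) = E Φ(S_x + u𝓔) - u E Φ'(S_x + u𝓔)`. -/
theorem exp_integration_by_parts
    {Ω : Type*} [MeasurableSpace Ω] (μ : Measure Ω) [IsProbabilityMeasure μ]
    (Φ : ℝ → ℝ) (hΦ : ContDiff ℝ 1 Φ) (β : ℝ) (hβ : 0 < β)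
    (hgrow : Φ =O[cocompact ℝ] fun t => |t| ^ β)
    (hgrow' : (deriv Φ) =O[cocompact ℝ] fun t => |t| ^ β)
    (n : ℕ) (x : Fin n → ℝ) (u : ℝ)
    (E : Fin (n + 1) → Ω → ℝ) (hmeas : ∀ j, Measurable (E j))
    (hindep : iIndepFun E μ)
    (hlaw : ∀ j, Measure.map (E j) μ = expMeasure 1) :
    (∫ ω, Φ (∑ j : Fin n, x j * E j.castSucc ω) ∂μ)
      = (∫ ω, Φ ((∑ j : Fin n, x j * E j.castSucc ω) + u * E (Fin.last n) ω) ∂μ)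
        - u * ∫ ω, deriv Φ ((∑ j : Fin n, x j * E j.castSucc ω) + u * E (Fin.last n) ω) ∂μ := by
  classical
  have hexp : IsProbabilityMeasure (expMeasure 1) := isProbabilityMeasure_expMeasure one_pos
  have hΦc : Continuous Φ := hΦ.continuous
  have hΦ'c : Continuous (deriv Φ) := hΦ.continuous_deriv le_rfl
  obtain ⟨k, m, hmk, hβm⟩ : ∃ k m : ℕ, m = k + 1 ∧ β ≤ m :=
    ⟨⌈β⌉₊, ⌈β⌉₊ + 1, rfl, by push_cast; linarith [Nat.le_ceil β]⟩
  obtain ⟨C₁, hC₁, hb₁⟩ := expIBP_growth hΦc hβ hgrow hβm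
  obtain ⟨C₂, hC₂, hb₂⟩ := expIBP_growth hΦ'c hβ hgrow' hβm
  set C := max C₁ C₂ with hCdef
  have hC0 : 0 ≤ C := le_trans hC₁ (le_max_left _ _)
  have hb : ∀ t, |Φ t| ≤ C * (1 + |t|) ^ m := fun t =>
    le_trans (hb₁ t) (mul_le_mul_of_nonneg_right (le_max_left _ _) (by positivity))
  have hb' : ∀ t, |deriv Φ t| ≤ C * (1 + |t|) ^ m := fun t =>
    le_trans (hb₂ t) (mul_le_mul_of_nonneg_right (le_max_right _ _) (by positivity))
  set S : Ω → ℝ := fun ω => ∑ j : Fin n, x j * E j.castSucc ω with hSdef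
  set T : Ω → ℝ := E (Fin.last n) with hTdef
  have hSmeas : Measurable S :=
    Finset.measurable_sum _ fun j _ => (hmeas j.castSucc).const_mul (x j)
  have hTmeas : Measurable T := hmeas _
  -- independence of `S` and `T`
  have hindepST : IndepFun S T μ := by
    have hdisj : Disjoint (Finset.univ.image (Fin.castSucc (n := n)))
        ({Fin.last n} : Finset (Fin (n + 1))) := by
      rw [Finset.disjoint_right]
      intro i hi
      simp only [Finset.mem_singleton] at hi
      subst hi
      simp only [Finset.mem_image, Finset.mem_univ, true_and, not_exists]
      exact fun j => (Fin.castSucc_lt_last j).ne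
    have h1 := hindep.indepFun_finset (Finset.univ.image Fin.castSucc) {Fin.last n} hdisj hmeas
    have hmem : ∀ j : Fin n,
        (Fin.castSucc j) ∈ Finset.univ.image (Fin.castSucc (n := n)) := fun j =>
      Finset.mem_image_of_mem _ (Finset.mem_univ j)
    let φ : ((Finset.univ.image (Fin.castSucc (n := n)) : Finset (Fin (n + 1))) → ℝ) → ℝ :=
      fun v => ∑ j : Fin n, x j * v ⟨Fin.castSucc j, hmem j⟩
    let ψ : (({Fin.last n} : Finset (Fin (n + 1))) → ℝ) → ℝ :=
      fun v => v ⟨Fin.last n, Finset.mem_singleton_self _⟩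
    have hφ : Measurable φ :=
      Finset.measurable_sum _ fun j _ => (measurable_pi_apply _).const_mul _
    have hψ : Measurable ψ := measurable_pi_apply _
    exact h1.comp hφ hψ
  have hTlaw : μ.map T = expMeasure 1 := hlaw _
  have hprod : μ.map (fun ω => (S ω, T ω)) = (μ.map S).prod (expMeasure 1) := by
    have h := (indepFun_iff_map_prod_eq_prod_map_map hSmeas.aemeasurable
      hTmeas.aemeasurable).1 hindepST
    rwa [hTlaw] at h
  set ν := μ.map S with hνdef
  have hνprob : IsProbabilityMeasure ν := Measure.isProbabilityMeasure_map hSmeas.aemeasurable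
  -- a.e. nonnegativity of the `E j`
  have hE0 : ∀ᵐ ω ∂μ, ∀ i, 0 ≤ E i ω := by
    rw [ae_all_iff]
    intro i
    have hnull : μ (E i ⁻¹' (Iio 0)) = 0 := by
      rw [← Measure.map_apply (hmeas i) measurableSet_Iio, hlaw i]
      rw [show expMeasure 1 = volume.withDensity (exponentialPDF 1) from rfl,
        withDensity_apply _ measurableSet_Iio]
      exact lintegral_exponentialPDF_of_nonpos le_rfl
    rw [ae_iff]
    simp only [not_le]; exact hnull
  -- moments
  have hmomExp : Integrable (fun t : ℝ => (1 + |t|) ^ m) (expMeasure 1) := by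
    rw [expIBP_integrable_iff]
    refine (expIBP_integrableOn_one_add_pow m).congr_fun (fun t ht => ?_) measurableSet_Ioi
    rw [abs_of_pos ht]
  have hmomE : ∀ i : Fin (n + 1), Integrable (fun ω => |E i ω| ^ m) μ := by
    intro i
    have h1 : Integrable (fun t : ℝ => |t| ^ m) (expMeasure 1) := by
      rw [expIBP_integrable_iff]
      refine (expIBP_integrableOn_pow m).congr_fun (fun t ht => ?_) measurableSet_Ioi
      rw [abs_of_pos ht]
    exact (integrable_map_measure
      (by rw [hlaw i]; exact (measurable_abs.pow_const m).aestronglyMeasurable)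
      (hmeas i).aemeasurable).1 (by rw [hlaw i]; exact h1)
  have hmomS : Integrable (fun ω => (1 + |S ω|) ^ m) μ := by
    have hint : Integrable (fun ω =>
        (2:ℝ) ^ m * (1 + (n:ℝ) ^ m * ∑ j : Fin n, |x j| ^ m * |E j.castSucc ω| ^ m)) μ := by
      refine Integrable.const_mul (Integrable.add (integrable_const 1) ?_) _
      exact (integrable_finset_sum _ fun j _ => ((hmomE j.castSucc).const_mul _)).const_mul _
    refine hint.mono' ?_ ?_
    · exact ((measurable_const.add hSmeas.abs).pow_const m).aestronglyMeasurable
    · filter_upwards [hE0] with ω hω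
      set A := ∑ j : Fin n, |x j| * E j.castSucc ω with hAdef
      have hAnn : 0 ≤ A := Finset.sum_nonneg fun j _ => mul_nonneg (abs_nonneg _) (hω _)
      have hSA : |S ω| ≤ A := by
        refine le_trans (Finset.abs_sum_le_sum_abs _ _) (Finset.sum_le_sum fun j _ => ?_)
        rw [abs_mul, abs_of_nonneg (hω _)]
      have h1 : (1 + |S ω|) ^ m ≤ (1 + A) ^ m :=
        pow_le_pow_left₀ (by positivity) (by linarith) m
      have h2 : (1 + A) ^ m ≤ 2 ^ m * (1 + A ^ m) := expIBP_one_add_pow hAnn m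
      have h3 : A ^ m ≤ (n:ℝ) ^ m * ∑ j : Fin n, |x j| ^ m * |E j.castSucc ω| ^ m := by
        have h4 := expIBP_sum_pow (s := Finset.univ)
          (a := fun j : Fin n => |x j| * E j.castSucc ω)
          (fun j _ => mul_nonneg (abs_nonneg _) (hω _)) k
        rw [← hmk] at h4
        simp only [Finset.card_univ, Fintype.card_fin] at h4
        refine le_trans h4 ?_
        refine mul_le_mul_of_nonneg_left (Finset.sum_le_sum fun j _ => ?_) (by positivity)
        rw [mul_pow]
        exact mul_le_mul_of_nonneg_left (pow_le_pow_left₀ (hω _)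
          (le_abs_self _) m) (by positivity)
      have hnorm : ‖(1 + |S ω|) ^ m‖ = (1 + |S ω|) ^ m := by
        rw [Real.norm_eq_abs, abs_of_nonneg (by positivity)]
      rw [hnorm]
      have h2pos : (0:ℝ) < 2 ^ m := by positivity
      nlinarith
  -- integrability on the product space
  have hineq : ∀ a b : ℝ, 1 + |a + u * b| ≤ (1 + |a|) * ((1 + |u|) * (1 + |b|)) := by
    intro a b
    have h1 : |a + u * b| ≤ |a| + |u| * |b| := by
      refine le_trans (abs_add_le _ _) ?_
      rw [abs_mul]
    nlinarith [abs_nonneg a, abs_nonneg b, abs_nonneg u,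
      mul_nonneg (abs_nonneg a) (abs_nonneg u), mul_nonneg (abs_nonneg a) (abs_nonneg b),
      mul_nonneg (mul_nonneg (abs_nonneg a) (abs_nonneg u)) (abs_nonneg b),
      mul_nonneg (abs_nonneg u) (abs_nonneg b)]
  have hνmom : Integrable (fun s => (1 + |s|) ^ m) ν := by
    rw [hνdef]
    refine (integrable_map_measure ?_ hSmeas.aemeasurable).2 hmomS
    exact ((continuous_const.add continuous_abs).pow m).aestronglyMeasurable
  have key_int : ∀ f : ℝ → ℝ, Continuous f → (∀ t, |f t| ≤ C * (1 + |t|) ^ m) →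
      Integrable (fun p : ℝ × ℝ => f (p.1 + u * p.2)) (ν.prod (expMeasure 1)) := by
    intro f hf hbf
    refine Integrable.mono'
      (g := fun p => C * (1 + |u|) ^ m * ((1 + |p.1|) ^ m * (1 + |p.2|) ^ m)) ?_ ?_ ?_
    · exact (hνmom.mul_prod hmomExp).const_mul _
    · exact (hf.comp (continuous_fst.add (continuous_const.mul continuous_snd))).aestronglyMeasurable
    · refine Eventually.of_forall fun p => ?_
      rw [Real.norm_eq_abs]
      calc |f (p.1 + u * p.2)| ≤ C * (1 + |p.1 + u * p.2|) ^ m := hbf _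
      _ ≤ C * ((1 + |p.1|) * ((1 + |u|) * (1 + |p.2|))) ^ m :=
          mul_le_mul_of_nonneg_left (pow_le_pow_left₀ (by positivity) (hineq _ _) m) hC0
      _ = C * (1 + |u|) ^ m * ((1 + |p.1|) ^ m * (1 + |p.2|) ^ m) := by
          rw [mul_pow, mul_pow]; ring
  have hint1 := key_int Φ hΦc hb
  have hint2 := key_int (deriv Φ) hΦ'c hb'
  -- the inner (one-dimensional) integration by parts
  have hinner : ∀ s : ℝ, (∫ t, Φ (s + u * t) ∂(expMeasure 1))
      - u * ∫ t, deriv Φ (s + u * t) ∂(expMeasure 1) = Φ s := by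
    intro s
    rw [expIBP_integral, expIBP_integral, ← expIBP_key hΦ hb hb' u s, ← integral_const_mul,
      ← integral_sub (expIBP_integrableOn_comp hΦc hb s u)
        ((expIBP_integrableOn_comp hΦ'c hb' s u).const_mul u)]
    refine integral_congr_ae (Eventually.of_forall fun t => ?_)
    ring
  -- transfer the Ω-integrals to the product space
  have hPmeas : Measurable (fun ω => (S ω, T ω)) := hSmeas.prodMk hTmeas
  have transfer : ∀ f : ℝ → ℝ, Continuous f →
      Integrable (fun p : ℝ × ℝ => f (p.1 + u * p.2)) (ν.prod (expMeasure 1)) →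
      ∫ ω, f (S ω + u * T ω) ∂μ = ∫ s, ∫ t, f (s + u * t) ∂(expMeasure 1) ∂ν := by
    intro f hf hintf
    have h1 : ∫ p : ℝ × ℝ, f (p.1 + u * p.2) ∂(μ.map fun ω => (S ω, T ω))
        = ∫ ω, f (S ω + u * T ω) ∂μ := by
      refine integral_map hPmeas.aemeasurable ?_
      rw [hprod]
      exact (hf.comp (continuous_fst.add (continuous_const.mul continuous_snd))).aestronglyMeasurable
    rw [← h1, hprod, integral_prod _ hintf]
  have eq1 := transfer Φ hΦc hint1
  have eq2 := transfer (deriv Φ) hΦ'c hint2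
  have eq0 : ∫ ω, Φ (S ω) ∂μ = ∫ s, Φ s ∂ν :=
    (integral_map hSmeas.aemeasurable hΦc.aestronglyMeasurable).symm
  change ∫ ω, Φ (S ω) ∂μ
      = (∫ ω, Φ (S ω + u * T ω) ∂μ) - u * ∫ ω, deriv Φ (S ω + u * T ω) ∂μ
  rw [eq0, eq1, eq2, ← integral_const_mul,
    ← integral_sub hint1.integral_prod_left ((hint2.integral_prod_left).const_mul u)]
  exact integral_congr_ae (Eventually.of_forall fun s => (hinner s).symm)
end

section
/- Let Φ: ℝ → ℝ be continuously differentiable with |Φ(t)| = O(|t|^β) and |Φ'(t)| = O(|t|^β) for some β > 0. Let 𝓔, 𝓔', 𝓔_1, ..., 𝓔_n be i.i.d. standard exponential random variables, let x_1, ..., x_n and u ≠ v be real numbers, and S_x = Σ_{j=1}^n x_j·𝓔_j. Then (E[Φ(S_x + v·𝓔)] − E[Φ(S_x + u·𝓔)])/(v − u) = E[Φ'(S_x + u·𝓔 + v·𝓔')]. -/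
open MeasureTheory ProbabilityTheory Filter Asymptotics

namespace ExpDQ

open Real Set

lemma one_add_abs_add (s t : ℝ) : 1 + |s + t| ≤ (1 + |s|) * (1 + |t|) := by
  have h := abs_add_le s t
  nlinarith [abs_nonneg s, abs_nonneg t]

lemma one_add_abs_mul (s t : ℝ) : 1 + |s * t| ≤ (1 + |s|) * (1 + |t|) := by
  rw [abs_mul]; nlinarith [abs_nonneg s, abs_nonneg t]

lemma rpow_add_le {β : ℝ} (hβ : 0 ≤ β) (s t : ℝ) :
    (1 + |s + t|) ^ β ≤ (1 + |s|) ^ β * (1 + |t|) ^ β := by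
  rw [← Real.mul_rpow (by positivity) (by positivity)]
  exact Real.rpow_le_rpow (by positivity) (one_add_abs_add s t) hβ

lemma rpow_mul_le {β : ℝ} (hβ : 0 ≤ β) (s t : ℝ) :
    (1 + |s * t|) ^ β ≤ (1 + |s|) ^ β * (1 + |t|) ^ β := by
  rw [← Real.mul_rpow (by positivity) (by positivity)]
  exact Real.rpow_le_rpow (by positivity) (one_add_abs_mul s t) hβ

lemma tendsto_rpow_mul_exp_neg (s b : ℝ) (hb : 0 < b) :
    Tendsto (fun x : ℝ => x ^ s * Real.exp (-(b * x))) atTop (nhds 0) := by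
  have h := tendsto_rpow_mul_exp_neg_mul_atTop_nhds_zero s b hb
  apply h.congr
  intro x
  rw [neg_mul]

lemma tendsto_one_add_rpow_mul_exp_neg (γ b : ℝ) (hb : 0 < b) :
    Tendsto (fun a : ℝ => (1 + a) ^ γ * Real.exp (-(b * a))) atTop (nhds 0) := by
  have h1 : Tendsto (fun a : ℝ => 1 + a) atTop atTop :=
    tendsto_atTop_add_const_left _ 1 tendsto_id
  have h := ((tendsto_rpow_mul_exp_neg γ b hb).comp h1).const_mul (Real.exp b)
  rw [mul_zero] at h
  apply h.congr
  intro a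
  simp only [Function.comp]
  rw [show -(b * (1 + a)) = -b + -(b * a) by ring, Real.exp_add, Real.exp_neg]
  have := Real.exp_pos b
  field_simp

lemma exists_bound_nonneg_of_tendsto {g : ℝ → ℝ} (hg : ContinuousOn g (Ici 0))
    (h : Tendsto g atTop (nhds 0)) : ∃ C : ℝ, 0 ≤ C ∧ ∀ a : ℝ, 0 ≤ a → g a ≤ C := by
  have hev : ∀ᶠ a in atTop, g a ≤ 1 := by
    have := h.eventually (eventually_le_nhds (show (0:ℝ) < 1 by norm_num))
    exact this
  obtain ⟨R, hR⟩ := hev.exists_forall_of_atTop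
  obtain ⟨M, hM⟩ := (isCompact_Icc (a := (0:ℝ)) (b := max R 0)).exists_bound_of_continuousOn
    (hg.mono (fun x hx => hx.1))
  refine ⟨max 1 (max M 0), le_trans zero_le_one (le_max_left _ _), fun a ha => ?_⟩
  rcases le_total a (max R 0) with hle | hle
  · have := hM a ⟨ha, hle⟩
    calc g a ≤ |g a| := le_abs_self _
      _ ≤ M := by simpa [Real.norm_eq_abs] using this
      _ ≤ max 1 (max M 0) := le_trans (le_max_left _ _) (le_max_right _ _)
  · have := hR a (le_trans (le_max_left _ _) hle)
    exact le_trans this (le_max_left _ _)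

lemma exists_one_add_rpow_le_exp {γ b : ℝ} (_hγ : 0 ≤ γ) (hb : 0 < b) :
    ∃ C : ℝ, 0 ≤ C ∧ ∀ a : ℝ, 0 ≤ a → (1 + a) ^ γ ≤ C * Real.exp (b * a) := by
  have hcont : ContinuousOn (fun a : ℝ => (1 + a) ^ γ * Real.exp (-(b * a))) (Ici 0) := by
    apply ContinuousOn.mul
    · apply ContinuousOn.rpow_const (by fun_prop)
      intro x hx
      left
      simp only [mem_Ici] at hx
      positivity
    · fun_prop
  obtain ⟨C, hC0, hC⟩ := exists_bound_nonneg_of_tendsto hcont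
    (tendsto_one_add_rpow_mul_exp_neg γ b hb)
  refine ⟨C, hC0, fun a ha => ?_⟩
  have h1 := hC a ha
  have h2 : (0:ℝ) < Real.exp (b * a) := Real.exp_pos _
  calc (1 + a) ^ γ = ((1 + a) ^ γ * Real.exp (-(b * a))) * Real.exp (b * a) := by
        rw [mul_assoc, ← Real.exp_add]; simp
    _ ≤ C * Real.exp (b * a) := mul_le_mul_of_nonneg_right h1 h2.le

lemma growth_bound {f : ℝ → ℝ} (hf : Continuous f) {β : ℝ} (hβ : 0 ≤ β)
    (h : f =O[cocompact ℝ] fun t => |t| ^ β) :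
    ∃ C : ℝ, 0 ≤ C ∧ ∀ t : ℝ, |f t| ≤ C * (1 + |t|) ^ β := by
  obtain ⟨c, hc⟩ := h.isBigOWith
  have hb := hc.bound
  rw [Filter.hasBasis_cocompact.eventually_iff] at hb
  obtain ⟨K, hK, hKb⟩ := hb
  obtain ⟨r, hr⟩ := hK.isBounded.subset_closedBall 0
  obtain ⟨M, hM⟩ := (isCompact_closedBall (0:ℝ) (|r| + 1)).exists_bound_of_continuousOn
    hf.continuousOn
  set C := max (max c 0) (max M 0) with hC
  have hC0 : 0 ≤ C := le_trans (le_max_right M 0) (le_max_right _ _)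
  refine ⟨C, hC0, fun t => ?_⟩
  have hpow0 : (0:ℝ) ≤ (1 + |t|) ^ β := Real.rpow_nonneg (by positivity) _
  have hpow1 : (1:ℝ) ≤ (1 + |t|) ^ β := by
    calc (1:ℝ) = 1 ^ β := (Real.one_rpow β).symm
      _ ≤ (1 + |t|) ^ β := Real.rpow_le_rpow zero_le_one (by nlinarith [abs_nonneg t]) hβ
  by_cases ht : t ∈ Metric.closedBall (0:ℝ) (|r| + 1)
  · have h1 : |f t| ≤ M := by simpa [Real.norm_eq_abs] using hM t ht
    calc |f t| ≤ M := h1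
      _ ≤ max M 0 := le_max_left _ _
      _ = max M 0 * 1 := (mul_one _).symm
      _ ≤ C * (1 + |t|) ^ β :=
          mul_le_mul (le_max_right _ _) hpow1 zero_le_one hC0
  · have htK : t ∈ Kᶜ := by
      simp only [Set.mem_compl_iff]
      intro hmem
      exact ht (Metric.closedBall_subset_closedBall
        (by nlinarith [le_abs_self r, abs_nonneg r]) (hr hmem))
    have h1 := hKb htK
    have h2 : ‖|t| ^ β‖ = |t| ^ β := by
      rw [Real.norm_eq_abs, abs_of_nonneg (Real.rpow_nonneg (abs_nonneg t) _)]
    rw [Real.norm_eq_abs, h2] at h1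
    have h3 : |t| ^ β ≤ (1 + |t|) ^ β :=
      Real.rpow_le_rpow (abs_nonneg t) (by nlinarith [abs_nonneg t]) hβ
    calc |f t| ≤ c * |t| ^ β := h1
      _ ≤ max (max c 0) (max M 0) * |t| ^ β :=
          mul_le_mul_of_nonneg_right (le_trans (le_max_left c 0) (le_max_left _ _))
            (Real.rpow_nonneg (abs_nonneg t) _)
      _ ≤ C * (1 + |t|) ^ β := mul_le_mul_of_nonneg_left h3 hC0

instance : IsProbabilityMeasure (expMeasure 1) := isProbabilityMeasure_expMeasure one_pos

lemma expMeasure_one_eq :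
    expMeasure 1 = volume.withDensity fun t => ENNReal.ofReal (if 0 ≤ t then Real.exp (-t) else 0) := by
  rw [expMeasure, gammaMeasure]
  congr 1
  funext t
  rw [show gammaPDF 1 1 t = exponentialPDF 1 t from rfl, exponentialPDF_eq]
  simp

lemma integral_expMeasure_one (f : ℝ → ℝ) :
    ∫ t, f t ∂(expMeasure 1) = ∫ t in Ioi (0:ℝ), f t * Real.exp (-t) := by
  rw [expMeasure_one_eq]
  have hd : Measurable fun t : ℝ => Real.toNNReal (if 0 ≤ t then Real.exp (-t) else 0) := by
    apply Measurable.real_toNNReal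
    exact Measurable.ite measurableSet_Ici (by fun_prop) measurable_const
  have he : (fun t : ℝ => ENNReal.ofReal (if 0 ≤ t then Real.exp (-t) else 0))
      = fun t => ((Real.toNNReal (if 0 ≤ t then Real.exp (-t) else 0) : NNReal) : ENNReal) := rfl
  rw [he, integral_withDensity_eq_integral_smul hd]
  have hfun : ∀ t : ℝ, (Real.toNNReal (if 0 ≤ t then Real.exp (-t) else 0) : NNReal) • f t
      = Set.indicator (Ici (0:ℝ)) (fun t => f t * Real.exp (-t)) t := by
    intro t
    simp only [NNReal.smul_def, smul_eq_mul]
    rw [Real.coe_toNNReal _ (by split_ifs <;> positivity)]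
    by_cases ht : 0 ≤ t
    · rw [if_pos ht, Set.indicator_of_mem (show t ∈ Ici (0:ℝ) from ht)]; ring
    · rw [if_neg ht, Set.indicator_of_notMem (by simpa using ht)]; ring
  simp_rw [hfun]
  rw [integral_indicator measurableSet_Ici, integral_Ici_eq_integral_Ioi]

lemma integrable_expMeasure_iff (f : ℝ → ℝ) :
    Integrable f (expMeasure 1) ↔
      IntegrableOn (fun t => f t * Real.exp (-t)) (Ioi (0:ℝ)) volume := by
  rw [expMeasure_one_eq, integrable_withDensity_iff]
  · have hfun : (fun t : ℝ => f t * (ENNReal.ofReal (if 0 ≤ t then Real.exp (-t) else 0)).toReal)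
        = Set.indicator (Ici (0:ℝ)) (fun t => f t * Real.exp (-t)) := by
      funext t
      rw [ENNReal.toReal_ofReal (by split_ifs <;> positivity)]
      by_cases ht : 0 ≤ t
      · rw [if_pos ht, Set.indicator_of_mem (show t ∈ Ici (0:ℝ) from ht)]
      · rw [if_neg ht, Set.indicator_of_notMem (by simpa using ht)]; ring
    rw [hfun, integrable_indicator_iff measurableSet_Ici]
    exact integrableOn_Ici_iff_integrableOn_Ioi
  · exact ENNReal.measurable_ofReal.comp
      (Measurable.ite measurableSet_Ici (by fun_prop) measurable_const)
  · exact Filter.Eventually.of_forall fun x => ENNReal.ofReal_lt_top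

lemma integrable_rpow_expMeasure {γ : ℝ} (hγ : 0 ≤ γ) :
    Integrable (fun t : ℝ => (1 + |t|) ^ γ) (expMeasure 1) := by
  rw [integrable_expMeasure_iff]
  obtain ⟨C, hC0, hC⟩ := exists_one_add_rpow_le_exp hγ (show (0:ℝ) < 1/2 by norm_num)
  have hint : IntegrableOn (fun t : ℝ => C * Real.exp (-(1/2) * t)) (Ioi 0) volume :=
    (exp_neg_integrableOn_Ioi 0 (by norm_num : (0:ℝ) < 1/2)).const_mul C
  apply hint.mono' ?_ ?_
  · apply Continuous.aestronglyMeasurable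
    apply Continuous.mul ?_ (by fun_prop)
    exact Continuous.rpow_const (by fun_prop) (fun x => Or.inl (by positivity))
  · filter_upwards [ae_restrict_mem measurableSet_Ioi] with t ht
    have ht0 : (0:ℝ) < t := ht
    have habs : |t| = t := abs_of_pos ht0
    have h1 : (1 + |t|) ^ γ ≤ C * Real.exp (1/2 * t) := by
      rw [habs]; exact hC t ht0.le
    have h2 : (0:ℝ) < Real.exp (-t) := Real.exp_pos _
    rw [Real.norm_eq_abs, abs_of_nonneg (by positivity)]
    calc (1 + |t|) ^ γ * Real.exp (-t) ≤ (C * Real.exp (1/2 * t)) * Real.exp (-t) :=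
          mul_le_mul_of_nonneg_right h1 h2.le
      _ = C * Real.exp (-(1/2) * t) := by rw [mul_assoc, ← Real.exp_add]; ring_nf

lemma integrable_of_le_rpow {f : ℝ → ℝ} (hm : AEStronglyMeasurable f (expMeasure 1))
    {K γ : ℝ} (hγ : 0 ≤ γ) (hb : ∀ t, |f t| ≤ K * (1 + |t|) ^ γ) :
    Integrable f (expMeasure 1) :=
  ((integrable_rpow_expMeasure hγ).const_mul K).mono' hm
    (Filter.Eventually.of_forall fun t => by simpa [Real.norm_eq_abs] using hb t)

lemma integrable_exp_mul_expMeasure {a : ℝ} (ha : a < 1) :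
    Integrable (fun s : ℝ => Real.exp (a * s)) (expMeasure 1) := by
  rw [integrable_expMeasure_iff]
  apply (exp_neg_integrableOn_Ioi 0 (show 0 < 1 - a by linarith)).congr_fun ?_ measurableSet_Ioi
  intro t _
  show Real.exp (-(1 - a) * t) = Real.exp (a * t) * Real.exp (-t)
  rw [← Real.exp_add]
  congr 1
  ring


lemma rpow_affine_le {β : ℝ} (hβ : 0 ≤ β) (c w t : ℝ) :
    (1 + |c + w * t|) ^ β ≤ (1 + |c|) ^ β * ((1 + |w|) ^ β * (1 + |t|) ^ β) :=
  (rpow_add_le hβ c (w * t)).trans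
    (mul_le_mul_of_nonneg_left (rpow_mul_le hβ w t) (Real.rpow_nonneg (by positivity) _))

lemma abs_comp_affine_le {f : ℝ → ℝ} {D β : ℝ} (hβ : 0 ≤ β) (hD : 0 ≤ D)
    (hb : ∀ s, |f s| ≤ D * (1 + |s|) ^ β) (c w t : ℝ) :
    |f (c + w * t)| ≤ D * ((1 + |c|) ^ β * (1 + |w|) ^ β) * (1 + |t|) ^ β := by
  calc |f (c + w * t)| ≤ D * (1 + |c + w * t|) ^ β := hb _
    _ ≤ D * ((1 + |c|) ^ β * ((1 + |w|) ^ β * (1 + |t|) ^ β)) :=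
        mul_le_mul_of_nonneg_left (rpow_affine_le hβ c w t) hD
    _ = D * ((1 + |c|) ^ β * (1 + |w|) ^ β) * (1 + |t|) ^ β := by ring

lemma integrable_comp_affine {f : ℝ → ℝ} (hf : Continuous f) {D β : ℝ} (hD : 0 ≤ D) (hβ : 0 ≤ β)
    (hb : ∀ s, |f s| ≤ D * (1 + |s|) ^ β) (c w : ℝ) :
    Integrable (fun t => f (c + w * t)) (expMeasure 1) := by
  apply integrable_of_le_rpow ((hf.comp (by fun_prop)).aestronglyMeasurable) hβ
    (K := D * ((1 + |c|) ^ β * (1 + |w|) ^ β))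
  exact fun t => abs_comp_affine_le hβ hD hb c w t

lemma integral_parts {Φ : ℝ → ℝ} (hΦ : ContDiff ℝ 1 Φ) {D β : ℝ} (hD : 0 ≤ D) (hβ : 0 ≤ β)
    (hΦb : ∀ s, |Φ s| ≤ D * (1 + |s|) ^ β) (hΦ'b : ∀ s, |deriv Φ s| ≤ D * (1 + |s|) ^ β)
    (c w : ℝ) :
    w * ∫ t, deriv Φ (c + w * t) ∂(expMeasure 1)
      = (∫ t, Φ (c + w * t) ∂(expMeasure 1)) - Φ c := by
  have hΦc : Continuous Φ := hΦ.continuous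
  have hΦ'c : Continuous (deriv Φ) := hΦ.continuous_deriv le_rfl
  have hint1 : Integrable (fun t => deriv Φ (c + w * t)) (expMeasure 1) :=
    integrable_comp_affine hΦ'c hD hβ hΦ'b c w
  have hint2 : Integrable (fun t => Φ (c + w * t)) (expMeasure 1) :=
    integrable_comp_affine hΦc hD hβ hΦb c w
  have hderiv : ∀ t : ℝ, HasDerivAt (fun t => Φ (c + w * t) * Real.exp (-t))
      ((w * deriv Φ (c + w * t) - Φ (c + w * t)) * Real.exp (-t)) t := by
    intro t
    have hg : HasDerivAt (fun t : ℝ => c + w * t) w t := by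
      simpa using ((hasDerivAt_id t).const_mul w).const_add c
    have h1 : HasDerivAt (fun t : ℝ => Φ (c + w * t)) (deriv Φ (c + w * t) * w) t :=
      (((hΦ.differentiable one_ne_zero) (c + w * t)).hasDerivAt).comp t hg
    have h2 : HasDerivAt (fun t : ℝ => Real.exp (-t)) (-Real.exp (-t)) t := by
      simpa [Function.comp_def] using (Real.hasDerivAt_exp (-t)).comp t (hasDerivAt_neg t)
    have h3 := h1.mul h2
    exact h3.congr_deriv (by ring)
  have hIOn : IntegrableOn
      (fun t => (w * deriv Φ (c + w * t) - Φ (c + w * t)) * Real.exp (-t)) (Ioi 0) volume := by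
    have hI := integrable_rpow_expMeasure hβ
    rw [integrable_expMeasure_iff] at hI
    apply (hI.const_mul ((|w| + 1) * (D * ((1 + |c|) ^ β * (1 + |w|) ^ β)))).mono'
    · exact (((continuous_const.mul (hΦ'c.comp (by fun_prop))).sub
        (hΦc.comp (by fun_prop))).mul (by fun_prop)).aestronglyMeasurable
    · apply Filter.Eventually.of_forall
      intro t
      have e1 := abs_comp_affine_le hβ hD hΦ'b c w t
      have e2 := abs_comp_affine_le hβ hD hΦb c w t
      have he : (0:ℝ) < Real.exp (-t) := Real.exp_pos _
      have e3 : |w * deriv Φ (c + w * t) - Φ (c + w * t)|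
          ≤ (|w| + 1) * (D * ((1 + |c|) ^ β * (1 + |w|) ^ β)) * (1 + |t|) ^ β := by
        calc |w * deriv Φ (c + w * t) - Φ (c + w * t)|
            ≤ |w * deriv Φ (c + w * t)| + |Φ (c + w * t)| := abs_sub _ _
          _ = |w| * |deriv Φ (c + w * t)| + |Φ (c + w * t)| := by rw [abs_mul]
          _ ≤ (|w| + 1) * (D * ((1 + |c|) ^ β * (1 + |w|) ^ β)) * (1 + |t|) ^ β := by
              nlinarith [abs_nonneg w, abs_nonneg (deriv Φ (c + w * t)),
                abs_nonneg (Φ (c + w * t)), e1, e2,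
                mul_le_mul_of_nonneg_left e1 (abs_nonneg w)]
      rw [Real.norm_eq_abs, abs_mul, abs_of_pos he]
      calc |w * deriv Φ (c + w * t) - Φ (c + w * t)| * Real.exp (-t)
          ≤ ((|w| + 1) * (D * ((1 + |c|) ^ β * (1 + |w|) ^ β)) * (1 + |t|) ^ β) * Real.exp (-t) :=
            mul_le_mul_of_nonneg_right e3 he.le
        _ = (|w| + 1) * (D * ((1 + |c|) ^ β * (1 + |w|) ^ β)) * ((1 + |t|) ^ β * Real.exp (-t)) := by
            ring
  have htend : Tendsto (fun t => Φ (c + w * t) * Real.exp (-t)) atTop (nhds 0) := by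
    have hg := (tendsto_one_add_rpow_mul_exp_neg β 1 one_pos).const_mul
      (D * ((1 + |c|) ^ β * (1 + |w|) ^ β))
    rw [mul_zero] at hg
    have hg' : Tendsto (fun t : ℝ => D * ((1 + |c|) ^ β * (1 + |w|) ^ β)
        * ((1 + t) ^ β * Real.exp (-t))) atTop (nhds 0) := by
      apply hg.congr
      intro t
      norm_num
    apply squeeze_zero_norm' ?_ hg'
    filter_upwards [eventually_ge_atTop (0:ℝ)] with t ht
    have e2 := abs_comp_affine_le hβ hD hΦb c w t
    rw [abs_of_nonneg ht] at e2
    have he : (0:ℝ) < Real.exp (-t) := Real.exp_pos _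
    rw [Real.norm_eq_abs, abs_mul, abs_of_pos he]
    calc |Φ (c + w * t)| * Real.exp (-t)
        ≤ (D * ((1 + |c|) ^ β * (1 + |w|) ^ β) * (1 + t) ^ β) * Real.exp (-t) :=
          mul_le_mul_of_nonneg_right e2 he.le
      _ = D * ((1 + |c|) ^ β * (1 + |w|) ^ β) * ((1 + t) ^ β * Real.exp (-t)) := by ring
  have h0 : ∫ t in Ioi (0:ℝ), (w * deriv Φ (c + w * t) - Φ (c + w * t)) * Real.exp (-t)
      = 0 - Φ (c + w * 0) * Real.exp (-0) := by
    apply integral_Ioi_of_hasDerivAt_of_tendsto ?_ (fun x _ => hderiv x) hIOn htend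
    exact Continuous.continuousWithinAt ((hΦc.comp (by fun_prop)).mul (by fun_prop))
  norm_num at h0
  have key : ∫ t, (w * deriv Φ (c + w * t) - Φ (c + w * t)) ∂(expMeasure 1) = -Φ c :=
    (integral_expMeasure_one _).trans h0
  rw [integral_sub (hint1.const_mul w) hint2, integral_const_mul] at key
  linarith

lemma integrable_comp_affine2 {f : ℝ → ℝ} (hf : Continuous f) {D β : ℝ} (hD : 0 ≤ D) (hβ : 0 ≤ β)
    (hb : ∀ s, |f s| ≤ D * (1 + |s|) ^ β) (c u v : ℝ) :
    Integrable (fun q : ℝ × ℝ => f (c + u * q.1 + v * q.2))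
      ((expMeasure 1).prod (expMeasure 1)) := by
  have hg : Integrable (fun q : ℝ × ℝ => (1 + |q.1|) ^ β * (1 + |q.2|) ^ β)
      ((expMeasure 1).prod (expMeasure 1)) :=
    (integrable_rpow_expMeasure hβ).mul_prod (integrable_rpow_expMeasure hβ)
  apply (hg.const_mul (D * ((1 + |c|) ^ β * ((1 + |u|) ^ β * (1 + |v|) ^ β)))).mono'
  · exact (hf.comp (by fun_prop)).aestronglyMeasurable
  · apply Filter.Eventually.of_forall
    rintro ⟨a, b⟩
    simp only [Real.norm_eq_abs]
    calc |f (c + u * a + v * b)| ≤ D * (1 + |c + u * a + v * b|) ^ β := hb _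
      _ ≤ D * ((1 + |c + u * a|) ^ β * ((1 + |v|) ^ β * (1 + |b|) ^ β)) :=
          mul_le_mul_of_nonneg_left (rpow_affine_le hβ (c + u * a) v b) hD
      _ ≤ D * (((1 + |c|) ^ β * ((1 + |u|) ^ β * (1 + |a|) ^ β))
            * ((1 + |v|) ^ β * (1 + |b|) ^ β)) :=
          mul_le_mul_of_nonneg_left
            (mul_le_mul_of_nonneg_right (rpow_affine_le hβ c u a) (by positivity)) hD
      _ = D * ((1 + |c|) ^ β * ((1 + |u|) ^ β * (1 + |v|) ^ β))
            * ((1 + |a|) ^ β * (1 + |b|) ^ β) := by ring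

lemma integrable_comp_affine3 {ρ : Measure ℝ} [IsProbabilityMeasure ρ] {D β : ℝ}
    (hmom : Integrable (fun y : ℝ => (1 + |y|) ^ β) ρ)
    {f : ℝ → ℝ} (hf : Continuous f) (hD : 0 ≤ D) (hβ : 0 ≤ β)
    (hb : ∀ s, |f s| ≤ D * (1 + |s|) ^ β) (u v : ℝ) :
    Integrable (fun p : ℝ × ℝ × ℝ => f (p.1 + u * p.2.1 + v * p.2.2))
      (ρ.prod ((expMeasure 1).prod (expMeasure 1))) := by
  have hg : Integrable (fun p : ℝ × ℝ × ℝ => (1 + |p.1|) ^ β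
      * ((1 + |p.2.1|) ^ β * (1 + |p.2.2|) ^ β))
      (ρ.prod ((expMeasure 1).prod (expMeasure 1))) :=
    hmom.mul_prod ((integrable_rpow_expMeasure hβ).mul_prod (integrable_rpow_expMeasure hβ))
  apply (hg.const_mul (D * ((1 + |u|) ^ β * (1 + |v|) ^ β))).mono'
  · exact (hf.comp (by fun_prop)).aestronglyMeasurable
  · apply Filter.Eventually.of_forall
    rintro ⟨y, a, b⟩
    simp only [Real.norm_eq_abs]
    calc |f (y + u * a + v * b)| ≤ D * (1 + |y + u * a + v * b|) ^ β := hb _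
      _ ≤ D * ((1 + |y + u * a|) ^ β * ((1 + |v|) ^ β * (1 + |b|) ^ β)) :=
          mul_le_mul_of_nonneg_left (rpow_affine_le hβ (y + u * a) v b) hD
      _ ≤ D * (((1 + |y|) ^ β * ((1 + |u|) ^ β * (1 + |a|) ^ β))
            * ((1 + |v|) ^ β * (1 + |b|) ^ β)) :=
          mul_le_mul_of_nonneg_left
            (mul_le_mul_of_nonneg_right (rpow_affine_le hβ y u a) (by positivity)) hD
      _ = D * ((1 + |u|) ^ β * (1 + |v|) ^ β)
            * ((1 + |y|) ^ β * ((1 + |a|) ^ β * (1 + |b|) ^ β)) := by ring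


lemma pointwise_identity {Φ : ℝ → ℝ} (hΦ : ContDiff ℝ 1 Φ) {D β : ℝ} (hD : 0 ≤ D) (hβ : 0 ≤ β)
    (hΦb : ∀ s, |Φ s| ≤ D * (1 + |s|) ^ β) (hΦ'b : ∀ s, |deriv Φ s| ≤ D * (1 + |s|) ^ β)
    (u v y : ℝ) :
    (∫ q : ℝ × ℝ, Φ (y + v * q.1) ∂((expMeasure 1).prod (expMeasure 1)))
      - (∫ q : ℝ × ℝ, Φ (y + u * q.1) ∂((expMeasure 1).prod (expMeasure 1)))
      = (v - u) * ∫ q : ℝ × ℝ, deriv Φ (y + u * q.1 + v * q.2)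
          ∂((expMeasure 1).prod (expMeasure 1)) := by
  have hΦc : Continuous Φ := hΦ.continuous
  have hΦ'c : Continuous (deriv Φ) := hΦ.continuous_deriv le_rfl
  have hred : ∀ w : ℝ, (∫ q : ℝ × ℝ, Φ (y + w * q.1) ∂((expMeasure 1).prod (expMeasure 1)))
      = ∫ a, Φ (y + w * a) ∂(expMeasure 1) := by
    intro w
    have hi : Integrable (fun q : ℝ × ℝ => Φ (y + w * q.1))
        ((expMeasure 1).prod (expMeasure 1)) := by
      have h := integrable_comp_affine2 hΦc hD hβ hΦb y w 0
      apply h.congr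
      apply Filter.Eventually.of_forall
      rintro ⟨a, b⟩
      norm_num
    rw [integral_prod _ hi]
    simp
  have hiΦ : Integrable (fun q : ℝ × ℝ => Φ (y + u * q.1 + v * q.2))
      ((expMeasure 1).prod (expMeasure 1)) :=
    integrable_comp_affine2 hΦc hD hβ hΦb y u v
  have hiΦ' : Integrable (fun q : ℝ × ℝ => deriv Φ (y + u * q.1 + v * q.2))
      ((expMeasure 1).prod (expMeasure 1)) :=
    integrable_comp_affine2 hΦ'c hD hβ hΦ'b y u v
  set G := ∫ q : ℝ × ℝ, deriv Φ (y + u * q.1 + v * q.2)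
      ∂((expMeasure 1).prod (expMeasure 1)) with hG
  have hGiter : G = ∫ a, ∫ b, deriv Φ (y + u * a + v * b)
      ∂(expMeasure 1) ∂(expMeasure 1) := integral_prod _ hiΦ'
  have hswapΦ' : (∫ a, ∫ b, deriv Φ (y + u * a + v * b) ∂(expMeasure 1) ∂(expMeasure 1))
      = ∫ b, ∫ a, deriv Φ (y + u * a + v * b) ∂(expMeasure 1) ∂(expMeasure 1) :=
    integral_integral_swap hiΦ'
  have hswapΦ : (∫ a, ∫ b, Φ (y + u * a + v * b) ∂(expMeasure 1) ∂(expMeasure 1))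
      = ∫ b, ∫ a, Φ (y + u * a + v * b) ∂(expMeasure 1) ∂(expMeasure 1) :=
    integral_integral_swap hiΦ
  have hvG : v * G = (∫ a, ∫ b, Φ (y + u * a + v * b) ∂(expMeasure 1) ∂(expMeasure 1))
      - ∫ a, Φ (y + u * a) ∂(expMeasure 1) := by
    have hpt : ∀ a : ℝ, v * ∫ b, deriv Φ (y + u * a + v * b) ∂(expMeasure 1)
        = (∫ b, Φ (y + u * a + v * b) ∂(expMeasure 1)) - Φ (y + u * a) :=
      fun a => integral_parts hΦ hD hβ hΦb hΦ'b (y + u * a) v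
    calc v * G = ∫ a, v * ∫ b, deriv Φ (y + u * a + v * b) ∂(expMeasure 1) ∂(expMeasure 1) := by
          rw [hGiter, ← integral_const_mul]
      _ = ∫ a, ((∫ b, Φ (y + u * a + v * b) ∂(expMeasure 1)) - Φ (y + u * a)) ∂(expMeasure 1) :=
          integral_congr_ae (Filter.Eventually.of_forall fun a => hpt a)
      _ = (∫ a, ∫ b, Φ (y + u * a + v * b) ∂(expMeasure 1) ∂(expMeasure 1))
            - ∫ a, Φ (y + u * a) ∂(expMeasure 1) :=
          integral_sub hiΦ.integral_prod_left (integrable_comp_affine hΦc hD hβ hΦb y u)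
  have huG : u * G = (∫ b, ∫ a, Φ (y + u * a + v * b) ∂(expMeasure 1) ∂(expMeasure 1))
      - ∫ a, Φ (y + v * a) ∂(expMeasure 1) := by
    have hpt : ∀ b : ℝ, u * ∫ a, deriv Φ (y + v * b + u * a) ∂(expMeasure 1)
        = (∫ a, Φ (y + v * b + u * a) ∂(expMeasure 1)) - Φ (y + v * b) :=
      fun b => integral_parts hΦ hD hβ hΦb hΦ'b (y + v * b) u
    have hco : ∀ b : ℝ, (∫ a, deriv Φ (y + u * a + v * b) ∂(expMeasure 1))
        = ∫ a, deriv Φ (y + v * b + u * a) ∂(expMeasure 1) := by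
      intro b; congr 1; funext a; ring_nf
    have hco2 : ∀ b : ℝ, (∫ a, Φ (y + v * b + u * a) ∂(expMeasure 1))
        = ∫ a, Φ (y + u * a + v * b) ∂(expMeasure 1) := by
      intro b; congr 1; funext a; ring_nf
    have hlast : (∫ b, Φ (y + v * b) ∂(expMeasure 1)) = ∫ a, Φ (y + v * a) ∂(expMeasure 1) := rfl
    calc u * G = u * ∫ b, ∫ a, deriv Φ (y + u * a + v * b) ∂(expMeasure 1) ∂(expMeasure 1) := by
          rw [hGiter, hswapΦ']
      _ = ∫ b, u * ∫ a, deriv Φ (y + u * a + v * b) ∂(expMeasure 1) ∂(expMeasure 1) :=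
          (integral_const_mul u _).symm
      _ = ∫ b, ((∫ a, Φ (y + u * a + v * b) ∂(expMeasure 1)) - Φ (y + v * b)) ∂(expMeasure 1) := by
          apply integral_congr_ae (Filter.Eventually.of_forall fun b => ?_)
          rw [hco b, hpt b, hco2 b]
      _ = (∫ b, ∫ a, Φ (y + u * a + v * b) ∂(expMeasure 1) ∂(expMeasure 1))
            - ∫ a, Φ (y + v * a) ∂(expMeasure 1) := by
          rw [integral_sub hiΦ.integral_prod_right (integrable_comp_affine hΦc hD hβ hΦb y v)]
  rw [hred v, hred u]
  linear_combination huG - hvG - hswapΦ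


end ExpDQ

/-- **Difference-quotient identity for exponentials** (Lemma 2.2, first part):
for `Φ` a `C¹` function of moderate growth, i.i.d. standard exponentials
`𝓔₁, …, 𝓔ₙ, 𝓔, 𝓔'` and `S_x = ∑ x_j 𝓔_j`, for `u ≠ v` one has
`(E Φ(S_x + v𝓔) - E Φ(S_x + u𝓔))/(v - u) = E Φ'(S_x + u𝓔 + v𝓔')`. -/
theorem exp_difference_quotient
    {Ω : Type*} [MeasurableSpace Ω] (μ : Measure Ω) [IsProbabilityMeasure μ]
    (Φ : ℝ → ℝ) (hΦ : ContDiff ℝ 1 Φ) (β : ℝ) (hβ : 0 < β)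
    (hgrow : Φ =O[cocompact ℝ] fun t => |t| ^ β)
    (hgrow' : (deriv Φ) =O[cocompact ℝ] fun t => |t| ^ β)
    (n : ℕ) (x : Fin n → ℝ) (u v : ℝ) (huv : u ≠ v)
    (E : Fin (n + 2) → Ω → ℝ) (hmeas : ∀ j, Measurable (E j))
    (hindep : iIndepFun E μ)
    (hlaw : ∀ j, Measure.map (E j) μ = expMeasure 1) :
    ((∫ ω, Φ ((∑ j : Fin n, x j * E ⟨j.1, by omega⟩ ω) + v * E ⟨n, by omega⟩ ω) ∂μ)
        - ∫ ω, Φ ((∑ j : Fin n, x j * E ⟨j.1, by omega⟩ ω) + u * E ⟨n, by omega⟩ ω) ∂μ)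
          / (v - u)
      = ∫ ω, deriv Φ ((∑ j : Fin n, x j * E ⟨j.1, by omega⟩ ω)
          + u * E ⟨n, by omega⟩ ω + v * E ⟨n + 1, by omega⟩ ω) ∂μ := by
  classical
  have hβ' : (0:ℝ) ≤ β := hβ.le
  obtain ⟨C₁, hC₁0, hC₁⟩ := ExpDQ.growth_bound hΦ.continuous hβ' hgrow
  obtain ⟨C₂, hC₂0, hC₂⟩ := ExpDQ.growth_bound (hΦ.continuous_deriv le_rfl) hβ' hgrow'
  set D := max C₁ C₂ with hDdef
  have hD : 0 ≤ D := le_trans hC₁0 (le_max_left _ _)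
  have hΦb : ∀ s, |Φ s| ≤ D * (1 + |s|) ^ β := fun s =>
    (hC₁ s).trans (mul_le_mul_of_nonneg_right (le_max_left _ _)
      (Real.rpow_nonneg (by positivity) _))
  have hΦ'b : ∀ s, |deriv Φ s| ≤ D * (1 + |s|) ^ β := fun s =>
    (hC₂ s).trans (mul_le_mul_of_nonneg_right (le_max_right _ _)
      (Real.rpow_nonneg (by positivity) _))
  set Y : Ω → ℝ := fun ω => ∑ j : Fin n, x j * E ⟨j.1, by omega⟩ ω with hYdef
  set A : Ω → ℝ := fun ω => E ⟨n, by omega⟩ ω with hAdef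
  set B : Ω → ℝ := fun ω => E ⟨n + 1, by omega⟩ ω with hBdef
  have hY : Measurable Y := by
    rw [hYdef]
    apply Finset.measurable_sum
    intro j _
    exact (hmeas _).const_mul _
  have hA : Measurable A := hmeas _
  have hB : Measurable B := hmeas _
  -- moments of Y
  have hmom : Integrable (fun ω => (1 + |Y ω|) ^ β) μ := by
    set M : ℝ := 1 + ∑ j : Fin n, |x j| with hM
    have hM1 : (1:ℝ) ≤ M := by
      have h0 : (0:ℝ) ≤ ∑ j : Fin n, |x j| := Finset.sum_nonneg fun j _ => abs_nonneg _
      rw [hM]; linarith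
    have hM0 : (0:ℝ) < M := by linarith
    set t₀ : ℝ := M⁻¹ with ht₀def
    have ht₀ : 0 < t₀ := inv_pos.mpr hM0
    set c : Fin (n + 2) → ℝ := fun j => if h : (j : ℕ) < n then x ⟨j.1, h⟩ else 0 with hc
    have hcle : ∀ j, |c j| ≤ M - 1 := by
      intro j
      by_cases h : (j : ℕ) < n
      · simp only [hc, dif_pos h]
        have h2 := Finset.single_le_sum (f := fun j : Fin n => |x j|)
          (fun i _ => abs_nonneg _) (Finset.mem_univ (⟨j.1, h⟩ : Fin n))
        rw [hM]
        simpa using h2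
      · simp only [hc, dif_neg h, abs_zero]
        linarith
    set X : Fin (n + 2) → Ω → ℝ := fun j ω => c j * E j ω with hXdef
    have hX : iIndepFun X μ :=
      hindep.comp (fun j s => c j * s) (fun j => measurable_id.const_mul _)
    have hXmeas : ∀ j, Measurable (X j) := fun j => (hmeas j).const_mul _
    have hXexp : ∀ t : ℝ, |t| ≤ t₀ → ∀ j,
        Integrable (fun ω => Real.exp (t * X j ω)) μ := by
      intro t ht j
      have h1 : t * c j < 1 := by
        have h2 : |t * c j| ≤ t₀ * (M - 1) := by
          rw [abs_mul]
          exact mul_le_mul ht (hcle j) (abs_nonneg _) ht₀.le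
        have h3 : t₀ * (M - 1) = 1 - t₀ := by
          rw [ht₀def]
          field_simp
        nlinarith [le_abs_self (t * c j)]
      have h4 := ExpDQ.integrable_exp_mul_expMeasure h1
      rw [← hlaw j] at h4
      have h5 := (integrable_map_measure h4.aestronglyMeasurable (hmeas j).aemeasurable).mp h4
      apply h5.congr (Filter.Eventually.of_forall fun ω => ?_)
      simp only [Function.comp_apply, hXdef]
      ring_nf
    set e : Fin n ↪ Fin (n + 2) :=
      ⟨fun j => ⟨j.1, by omega⟩, fun a b hab => Fin.ext (by
        simpa using congrArg Fin.val hab)⟩ with he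
    have hYsum : ∀ ω, Y ω = ∑ j ∈ Finset.univ.map e, c j * E j ω := by
      intro ω
      rw [Finset.sum_map]
      simp only [hYdef, he, Function.Embedding.coeFn_mk, hc]
      apply Finset.sum_congr rfl
      intro j _
      show x j * E ⟨j.1, by omega⟩ ω = (if h : ((⟨j.1, by omega⟩ : Fin (n + 2)) : ℕ) < n
        then x ⟨((⟨j.1, by omega⟩ : Fin (n + 2)) : ℕ), h⟩ else 0) * E ⟨j.1, by omega⟩ ω
      rw [dif_pos (show ((⟨j.1, by omega⟩ : Fin (n + 2)) : ℕ) < n from j.isLt)]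
    have hYsum' : ∀ ω, (∑ j ∈ Finset.univ.map e, X j) ω = Y ω := by
      intro ω
      rw [Finset.sum_apply]
      simp only [hXdef]
      exact (hYsum ω).symm
    have hsum : ∀ t : ℝ, |t| ≤ t₀ → Integrable (fun ω => Real.exp (t * Y ω)) μ := by
      intro t ht
      have h := hX.integrable_exp_mul_sum hXmeas (s := Finset.univ.map e)
        (fun j _ => hXexp t ht j)
      apply h.congr (Filter.Eventually.of_forall fun ω => ?_)
      show Real.exp (t * (∑ j ∈ Finset.univ.map e, X j) ω) = Real.exp (t * Y ω)
      rw [hYsum' ω]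
    obtain ⟨Cm, hCm0, hCm⟩ := ExpDQ.exists_one_add_rpow_le_exp hβ' ht₀
    have h1 := hsum t₀ (by rw [abs_of_pos ht₀])
    have h2 := hsum (-t₀) (by rw [abs_neg, abs_of_pos ht₀])
    apply ((h1.add h2).const_mul Cm).mono'
    · have hg : Continuous fun s : ℝ => (1 + |s|) ^ β :=
        Continuous.rpow_const (continuous_const.add continuous_abs)
          (fun s => Or.inl (by positivity))
      exact (hg.measurable.comp hY).aestronglyMeasurable
    · apply Filter.Eventually.of_forall
      intro ω
      rw [Real.norm_eq_abs, abs_of_nonneg (Real.rpow_nonneg (by positivity) _)]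
      have hb1 : (1 + |Y ω|) ^ β ≤ Cm * Real.exp (t₀ * |Y ω|) := hCm _ (abs_nonneg _)
      have hb2 : Real.exp (t₀ * |Y ω|) ≤ Real.exp (t₀ * Y ω) + Real.exp (-t₀ * Y ω) := by
        rcases abs_cases (Y ω) with ⟨h, _⟩ | ⟨h, _⟩
        · rw [h]
          nlinarith [Real.exp_pos (-t₀ * Y ω)]
        · rw [h, show t₀ * -Y ω = -t₀ * Y ω by ring]
          nlinarith [Real.exp_pos (t₀ * Y ω)]
      calc (1 + |Y ω|) ^ β ≤ Cm * Real.exp (t₀ * |Y ω|) := hb1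
        _ ≤ Cm * (Real.exp (t₀ * Y ω) + Real.exp (-t₀ * Y ω)) :=
            mul_le_mul_of_nonneg_left hb2 hCm0
  -- law of Y and moments under the image measure
  haveI hρP : IsProbabilityMeasure (μ.map Y) := Measure.isProbabilityMeasure_map hY.aemeasurable
  have hgcont : Continuous fun s : ℝ => (1 + |s|) ^ β :=
    Continuous.rpow_const (continuous_const.add continuous_abs) (fun s => Or.inl (by positivity))
  have hmomρ : Integrable (fun y : ℝ => (1 + |y|) ^ β) (μ.map Y) := by
    rw [integrable_map_measure (hgcont.measurable.aestronglyMeasurable) hY.aemeasurable]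
    exact hmom
  -- joint law
  have hne : (⟨n, by omega⟩ : Fin (n + 2)) ≠ ⟨n + 1, by omega⟩ := by
    simp [Fin.ext_iff]
  have hlawA : Measure.map A μ = expMeasure 1 := hlaw _
  have hlawB : Measure.map B μ = expMeasure 1 := hlaw _
  have hABmap : μ.map (fun ω => (A ω, B ω)) = (expMeasure 1).prod (expMeasure 1) := by
    have h : μ.map (fun ω => (A ω, B ω)) = (μ.map A).prod (μ.map B) :=
      (indepFun_iff_map_prod_eq_prod_map_map hA.aemeasurable hB.aemeasurable).mp
        (hindep.indepFun hne)
    rw [h, hlawA, hlawB]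
  have hYAB : IndepFun Y (fun ω => (A ω, B ω)) μ := by
    set S : Finset (Fin (n + 2)) := Finset.univ.filter (fun i => (i : ℕ) < n) with hS
    set T : Finset (Fin (n + 2)) := {⟨n, by omega⟩, ⟨n + 1, by omega⟩} with hT
    have hST : Disjoint S T := by
      rw [Finset.disjoint_left]
      intro i hiS hiT
      rw [hS, Finset.mem_filter] at hiS
      rw [hT, Finset.mem_insert, Finset.mem_singleton] at hiT
      rcases hiT with h | h <;> rw [h] at hiS <;> simp at hiS
    have h := hindep.indepFun_finset S T hST hmeas
    have hφ : Measurable (fun g : (i : S) → ℝ =>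
        ∑ j : Fin n, x j * g ⟨⟨j.1, by omega⟩, by
          rw [hS, Finset.mem_filter]
          exact ⟨Finset.mem_univ _, j.isLt⟩⟩) := by
      apply Finset.measurable_sum
      intro j _
      exact (measurable_pi_apply _).const_mul _
    have hψ : Measurable (fun g : (i : T) → ℝ =>
        (g ⟨⟨n, by omega⟩, by rw [hT]; exact Finset.mem_insert_self _ _⟩,
         g ⟨⟨n + 1, by omega⟩, by rw [hT]; simp⟩)) :=
      (measurable_pi_apply _).prodMk (measurable_pi_apply _)
    exact h.comp hφ hψ
  have hmap : μ.map (fun ω => (Y ω, A ω, B ω))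
      = (μ.map Y).prod ((expMeasure 1).prod (expMeasure 1)) := by
    have h : μ.map (fun ω => (Y ω, A ω, B ω))
        = (μ.map Y).prod (μ.map (fun ω => (A ω, B ω))) :=
      (indepFun_iff_map_prod_eq_prod_map_map hY.aemeasurable
        (hA.prodMk hB).aemeasurable).mp hYAB
    rw [h, hABmap]
  -- transfer the three expectations
  have hΦ'c : Continuous (deriv Φ) := hΦ.continuous_deriv le_rfl
  have e1 : ∫ p : ℝ × ℝ × ℝ, Φ (p.1 + v * p.2.1)
        ∂((μ.map Y).prod ((expMeasure 1).prod (expMeasure 1)))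
      = ∫ ω, Φ (Y ω + v * A ω) ∂μ := by
    rw [← hmap]
    exact integral_map (hY.prodMk (hA.prodMk hB)).aemeasurable
      (hΦ.continuous.comp (by fun_prop)).aestronglyMeasurable
  have e2 : ∫ p : ℝ × ℝ × ℝ, Φ (p.1 + u * p.2.1)
        ∂((μ.map Y).prod ((expMeasure 1).prod (expMeasure 1)))
      = ∫ ω, Φ (Y ω + u * A ω) ∂μ := by
    rw [← hmap]
    exact integral_map (hY.prodMk (hA.prodMk hB)).aemeasurable
      (hΦ.continuous.comp (by fun_prop)).aestronglyMeasurable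
  have e3 : ∫ p : ℝ × ℝ × ℝ, deriv Φ (p.1 + u * p.2.1 + v * p.2.2)
        ∂((μ.map Y).prod ((expMeasure 1).prod (expMeasure 1)))
      = ∫ ω, deriv Φ (Y ω + u * A ω + v * B ω) ∂μ := by
    rw [← hmap]
    exact integral_map (hY.prodMk (hA.prodMk hB)).aemeasurable
      (hΦ'c.comp (by fun_prop)).aestronglyMeasurable
  -- the main identity on the product space
  have hiv : Integrable (fun p : ℝ × ℝ × ℝ => Φ (p.1 + v * p.2.1))
      ((μ.map Y).prod ((expMeasure 1).prod (expMeasure 1))) := by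
    have h := ExpDQ.integrable_comp_affine3 hmomρ hΦ.continuous hD hβ' hΦb v 0
    apply h.congr (Filter.Eventually.of_forall ?_)
    rintro ⟨y, a, b⟩
    norm_num
  have hiu : Integrable (fun p : ℝ × ℝ × ℝ => Φ (p.1 + u * p.2.1))
      ((μ.map Y).prod ((expMeasure 1).prod (expMeasure 1))) := by
    have h := ExpDQ.integrable_comp_affine3 hmomρ hΦ.continuous hD hβ' hΦb u 0
    apply h.congr (Filter.Eventually.of_forall ?_)
    rintro ⟨y, a, b⟩
    norm_num
  have hig : Integrable (fun p : ℝ × ℝ × ℝ => deriv Φ (p.1 + u * p.2.1 + v * p.2.2))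
      ((μ.map Y).prod ((expMeasure 1).prod (expMeasure 1))) :=
    ExpDQ.integrable_comp_affine3 hmomρ hΦ'c hD hβ' hΦ'b u v
  have main : (∫ p : ℝ × ℝ × ℝ, Φ (p.1 + v * p.2.1)
        ∂((μ.map Y).prod ((expMeasure 1).prod (expMeasure 1))))
      - (∫ p : ℝ × ℝ × ℝ, Φ (p.1 + u * p.2.1)
        ∂((μ.map Y).prod ((expMeasure 1).prod (expMeasure 1))))
      = (v - u) * ∫ p : ℝ × ℝ × ℝ, deriv Φ (p.1 + u * p.2.1 + v * p.2.2)
        ∂((μ.map Y).prod ((expMeasure 1).prod (expMeasure 1))) := by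
    rw [integral_prod _ hiv, integral_prod _ hiu, integral_prod _ hig]
    rw [← integral_sub hiv.integral_prod_left hiu.integral_prod_left, ← integral_const_mul]
    apply integral_congr_ae (Filter.Eventually.of_forall fun y => ?_)
    exact ExpDQ.pointwise_identity hΦ hD hβ' hΦb hΦ'b u v y
  show ((∫ ω, Φ (Y ω + v * A ω) ∂μ) - ∫ ω, Φ (Y ω + u * A ω) ∂μ) / (v - u)
      = ∫ ω, deriv Φ (Y ω + u * A ω + v * B ω) ∂μ
  rw [← e1, ← e2, ← e3, div_eq_iff (sub_ne_zero.mpr (Ne.symm huv))]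
  linear_combination main
end

section
/- For every s > 0 and every 0 < q < 2, one has ∫_0^∞ (1 − (1 + t²/s)^{−(1+s)/2}) / t^{q+1} dt = (1/q) · Γ(1 − q/2) · Γ((1+q+s)/2) / (s^{q/2} · Γ((1+s)/2)). -/
open MeasureTheory Real

section AuxLemmas
open Set


lemma realBeta (a b : ℝ) (ha : 0 < a) (hb : 0 < b) :
    ∫ y in Ioo (0:ℝ) 1, y ^ (a-1) * (1-y) ^ (b-1)
      = Real.Gamma a * Real.Gamma b / Real.Gamma (a+b) := by
  have hab : (0:ℝ) < Real.Gamma (a+b) := Real.Gamma_pos_of_pos (by linarith)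
  have key := Complex.Gamma_mul_Gamma_eq_betaIntegral
    (s := (a:ℂ)) (t := (b:ℂ)) (by simpa using ha) (by simpa using hb)
  have hIoc : ∫ y in Ioo (0:ℝ) 1, y ^ (a-1) * (1-y) ^ (b-1)
      = ∫ y in Ioc (0:ℝ) 1, y ^ (a-1) * (1-y) ^ (b-1) :=
    (integral_Ioc_eq_integral_Ioo).symm
  have hbeta : Complex.betaIntegral a b
      = ((∫ y in Ioo (0:ℝ) 1, y ^ (a-1) * (1-y) ^ (b-1) : ℝ) : ℂ) := by
    rw [hIoc]
    rw [Complex.betaIntegral]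
    rw [intervalIntegral.integral_of_le (by norm_num : (0:ℝ) ≤ 1)]
    refine Eq.trans (setIntegral_congr_fun measurableSet_Ioc fun x hx => ?_) integral_ofReal
    have hx0 : (0:ℝ) ≤ x := le_of_lt hx.1
    have hx1 : (0:ℝ) ≤ 1 - x := by linarith [hx.2]
    rw [show ((a:ℂ)-1) = ((a-1:ℝ):ℂ) by push_cast; ring,
        show ((b:ℂ)-1) = ((b-1:ℝ):ℂ) by push_cast; ring,
        show ((1:ℂ) - (x:ℝ)) = (((1-x:ℝ)):ℂ) by push_cast; ring,
        ← Complex.ofReal_cpow hx0, ← Complex.ofReal_cpow hx1]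
    norm_cast
  have : (Real.Gamma a : ℂ) * Real.Gamma b
      = (Real.Gamma (a+b) : ℂ) * ((∫ y in Ioo (0:ℝ) 1, y ^ (a-1) * (1-y) ^ (b-1) : ℝ) : ℂ) := by
    rw [← Complex.Gamma_ofReal a, ← Complex.Gamma_ofReal b, ← Complex.Gamma_ofReal (a+b),
      Complex.ofReal_add, key, hbeta]
  have h2 : Real.Gamma a * Real.Gamma b
      = Real.Gamma (a+b) * ∫ y in Ioo (0:ℝ) 1, y ^ (a-1) * (1-y) ^ (b-1) := by
    exact_mod_cast this
  field_simp [hab.ne'] at h2 ⊢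
  linarith [h2]

lemma gInt (a b : ℝ) (ha : 0 < a) (hb : 0 < b) :
    IntegrableOn (fun y : ℝ => y ^ (a-1) * (1-y) ^ (b-1)) (Ioo 0 1) := by
  have hc := Complex.betaIntegral_convergent (u := (a:ℂ)) (v := (b:ℂ))
    (by simpa using ha) (by simpa using hb)
  rw [intervalIntegrable_iff_integrableOn_Ioc_of_le (by norm_num : (0:ℝ) ≤ 1)] at hc
  have h2 : IntegrableOn (fun x : ℝ => Complex.re ((x:ℂ) ^ ((a:ℂ)-1) * (1-(x:ℂ)) ^ ((b:ℂ)-1))) (Ioc 0 1) := hc.re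
  refine ((h2.mono_set Ioo_subset_Ioc_self).congr_fun (fun x hx => ?_) measurableSet_Ioo)
  have hx0 : (0:ℝ) ≤ x := le_of_lt hx.1
  have hx1 : (0:ℝ) ≤ 1 - x := by linarith [hx.2.le]
  beta_reduce
  rw [show ((a:ℂ)-1) = ((a-1:ℝ):ℂ) by push_cast; ring,
      show ((b:ℂ)-1) = ((b-1:ℝ):ℂ) by push_cast; ring,
      show ((1:ℂ) - (x:ℝ)) = (((1-x:ℝ)):ℂ) by push_cast; ring,
      ← Complex.ofReal_cpow hx0, ← Complex.ofReal_cpow hx1, ← Complex.ofReal_mul,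
      Complex.ofReal_re]


lemma subst_pieces (a b : ℝ) (ha : 0 < a) (hb : 0 < b) :
    (∫ y in Ioo (0:ℝ) 1, y ^ (a-1) * (1-y) ^ (b-1))
        = ∫ x in Ioi (0:ℝ), (2 * x / (1+x^2)^2) •
            ((1 - (1+x^2)⁻¹) ^ (a-1) * ((1+x^2)⁻¹) ^ (b-1))
    ∧ IntegrableOn (fun x : ℝ => (2 * x / (1+x^2)^2) •
            ((1 - (1+x^2)⁻¹) ^ (a-1) * ((1+x^2)⁻¹) ^ (b-1))) (Ioi 0) := by
  set f : ℝ → ℝ := fun x => 1 - (1+x^2)⁻¹ with hf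
  set g : ℝ → ℝ := fun y => y ^ (a-1) * (1-y) ^ (b-1) with hg
  have hP : ∀ x : ℝ, (0:ℝ) < 1 + x^2 := fun x => by positivity
  have hder : ∀ x ∈ Ioi (0:ℝ), HasDerivWithinAt f (2 * x / (1+x^2)^2) (Ioi 0) x := by
    intro x hx
    have h1 : HasDerivAt (fun x : ℝ => 1 + x^2) (2*x) x := by
      simpa using ((hasDerivAt_pow 2 x).const_add 1)
    have h2 : HasDerivAt (fun x : ℝ => (1+x^2)⁻¹) (-(2*x) / (1+x^2)^2) x := h1.inv (hP x).ne'
    have h3 := (h2.const_sub 1)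
    simpa [hf, neg_div] using h3.hasDerivWithinAt
  have hmono : StrictMonoOn f (Ioi 0) := by
    intro x hx y hy hxy
    have : (1:ℝ) + x^2 < 1 + y^2 := by nlinarith [mem_Ioi.mp hx, mem_Ioi.mp hy]
    have := inv_strictAnti₀ (hP x) this
    simp only [hf]
    linarith
  have hinj : InjOn f (Ioi 0) := hmono.injOn
  have him : f '' Ioi 0 = Ioo 0 1 := by
    apply Subset.antisymm
    · rintro _ ⟨x, hx, rfl⟩
      have hx0 : (0:ℝ) < x := hx
      have h1 : (1+x^2)⁻¹ < 1 := by
        rw [inv_lt_one_iff₀]; right; nlinarith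
      have h2 : (0:ℝ) < (1+x^2)⁻¹ := inv_pos.mpr (hP x)
      refine ⟨by simp only [hf]; linarith, by simp only [hf]; linarith⟩
    · rintro y ⟨hy0, hy1⟩
      refine ⟨Real.sqrt (y / (1-y)), ?_, ?_⟩
      · have : 0 < y / (1-y) := div_pos hy0 (by linarith)
        exact Real.sqrt_pos.mpr this
      · have h1y : (0:ℝ) < 1 - y := by linarith
        have hsq : Real.sqrt (y/(1-y)) ^ 2 = y / (1-y) :=
          Real.sq_sqrt (le_of_lt (div_pos hy0 h1y))
        simp only [hf, hsq]
        have : 1 + y / (1-y) = 1/(1-y) := by field_simp; ring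
        rw [this]
        field_simp
        ring
  have key := integral_image_eq_integral_abs_deriv_smul measurableSet_Ioi hder hinj g
  have keyInt := (integrableOn_image_iff_integrableOn_abs_deriv_smul measurableSet_Ioi hder hinj g)
  rw [him] at key keyInt
  constructor
  · rw [key]
    refine setIntegral_congr_fun measurableSet_Ioi (fun x hx => ?_)
    have hx0 : (0:ℝ) < x := hx
    have habs : |2 * x / (1+x^2)^2| = 2 * x / (1+x^2)^2 := by
      rw [abs_of_nonneg]; positivity
    simp only [habs, hg, hf]
    norm_num
  · have := keyInt.mp (gInt a b ha hb)
    refine this.congr_fun (fun x hx => ?_) measurableSet_Ioi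
    have hx0 : (0:ℝ) < x := hx
    have habs : |2 * x / (1+x^2)^2| = 2 * x / (1+x^2)^2 := by
      rw [abs_of_nonneg]; positivity
    simp only [habs, hg, hf]
    norm_num

lemma pointwise_J (a b x : ℝ) (hx0 : 0 < x) :
    (2 * x / (1+x^2)^2) • ((1 - (1+x^2)⁻¹) ^ (a-1) * ((1+x^2)⁻¹) ^ (b-1))
      = 2 * (x ^ (2*a-1) * (1+x^2) ^ (-(a+b))) := by
  have hP : (0:ℝ) < 1 + x^2 := by positivity
  have e1 : (1 : ℝ) - (1+x^2)⁻¹ = x^2 / (1+x^2) := by field_simp; ring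
  have e2 : ((x:ℝ)^2/(1+x^2)) ^ (a-1) = x ^ (2*(a-1)) / (1+x^2) ^ (a-1) := by
    rw [Real.div_rpow (by positivity) hP.le, ← Real.rpow_natCast x 2, ← Real.rpow_mul hx0.le]
    norm_num
  have e3 : ((1+x^2:ℝ)⁻¹) ^ (b-1) = ((1+x^2) ^ (b-1))⁻¹ := Real.inv_rpow hP.le _
  have f1 : x ^ (2*a-1) = x * x ^ (2*(a-1)) := by
    rw [show (2*a-1 : ℝ) = 1 + 2*(a-1) by ring, Real.rpow_add hx0, Real.rpow_one]
  have f2 : (1+x^2:ℝ) ^ (-(a+b)) = ((1+x^2)^2)⁻¹ * (((1+x^2) ^ (a-1))⁻¹ * ((1+x^2) ^ (b-1))⁻¹) := by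
    rw [show (-(a+b) : ℝ) = (-(2:ℕ)) + (-(a-1) + -(b-1)) by push_cast; ring,
      Real.rpow_add hP, Real.rpow_add hP, Real.rpow_neg hP.le, Real.rpow_neg hP.le,
      Real.rpow_neg hP.le, Real.rpow_natCast]
  rw [e1, e2, e3, f1, f2]
  have h4 : ((1+x^2:ℝ) ^ (a-1)) ≠ 0 := (Real.rpow_pos_of_pos hP _).ne'
  have h5 : ((1+x^2:ℝ) ^ (b-1)) ≠ 0 := (Real.rpow_pos_of_pos hP _).ne'
  have h6 : ((1+x^2:ℝ)^2) ≠ 0 := by positivity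
  simp only [smul_eq_mul]
  ring

lemma J_val (a b : ℝ) (ha : 0 < a) (hb : 0 < b) :
    ∫ x in Ioi (0:ℝ), x ^ (2*a-1) * (1+x^2) ^ (-(a+b))
      = Real.Gamma a * Real.Gamma b / (2 * Real.Gamma (a+b)) := by
  have h := (subst_pieces a b ha hb).1
  rw [realBeta a b ha hb] at h
  have h2 : ∫ x in Ioi (0:ℝ), (2 * x / (1+x^2)^2) •
      ((1 - (1+x^2)⁻¹) ^ (a-1) * ((1+x^2)⁻¹) ^ (b-1))
      = 2 * ∫ x in Ioi (0:ℝ), x ^ (2*a-1) * (1+x^2) ^ (-(a+b)) := by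
    rw [← integral_const_mul]
    exact setIntegral_congr_fun measurableSet_Ioi (fun x hx => pointwise_J a b x hx)
  rw [h2] at h
  have hab : (0:ℝ) < Real.Gamma (a+b) := Real.Gamma_pos_of_pos (by linarith)
  field_simp at h ⊢
  linarith

lemma J_int (a b : ℝ) (ha : 0 < a) (hb : 0 < b) :
    IntegrableOn (fun x : ℝ => x ^ (2*a-1) * (1+x^2) ^ (-(a+b))) (Ioi 0) := by
  have h := (subst_pieces a b ha hb).2
  have h2 : IntegrableOn (fun x : ℝ => (1/2) * (2 * (x ^ (2*a-1) * (1+x^2) ^ (-(a+b))))) (Ioi 0) :=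
    (h.congr_fun (fun x hx => pointwise_J a b x hx) measurableSet_Ioi).const_mul (1/2)
  refine h2.congr_fun (fun x hx => ?_) measurableSet_Ioi
  ring

lemma scale_eq (s p r : ℝ) (hs : 0 < s) :
    (∫ t in Ioi (0:ℝ), t ^ p * (1 + t^2/s) ^ r)
      = s ^ ((p+1)/2) * ∫ x in Ioi (0:ℝ), x ^ p * (1+x^2) ^ r := by
  have hrs : (0:ℝ) < Real.sqrt s := Real.sqrt_pos.mpr hs
  have key := integral_comp_mul_left_Ioi (fun t : ℝ => t ^ p * (1 + t^2/s) ^ r) 0 hrs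
  rw [mul_zero] at key
  have hpt : ∀ x ∈ Ioi (0:ℝ), (fun t : ℝ => t ^ p * (1 + t^2/s) ^ r) (Real.sqrt s * x)
      = Real.sqrt s ^ p * (x ^ p * (1+x^2) ^ r) := by
    intro x hx
    have hx0 : (0:ℝ) < x := hx
    simp only
    rw [Real.mul_rpow hrs.le hx0.le, mul_pow, Real.sq_sqrt hs.le]
    rw [show s * x^2 / s = x^2 by field_simp]
    ring
  rw [setIntegral_congr_fun measurableSet_Ioi hpt] at key
  rw [integral_const_mul] at key
  have final : (∫ t in Ioi (0:ℝ), t ^ p * (1 + t^2/s) ^ r)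
      = Real.sqrt s * (Real.sqrt s ^ p * ∫ x in Ioi (0:ℝ), x ^ p * (1+x^2) ^ r) := by
    have h2 := key
    rw [smul_eq_mul] at h2
    have h3 := congrArg (fun z => Real.sqrt s * z) h2
    rw [mul_inv_cancel_left₀ hrs.ne'] at h3
    rw [← h3]
  have hss : Real.sqrt s * Real.sqrt s ^ p = s ^ ((p+1)/2) := by
    rw [Real.sqrt_eq_rpow, ← Real.rpow_mul hs.le, ← Real.rpow_add hs]
    congr 1
    ring
  rw [final, ← mul_assoc, hss]

lemma scale_int (s p r : ℝ) (hs : 0 < s)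
    (h : IntegrableOn (fun x : ℝ => x ^ p * (1+x^2) ^ r) (Ioi 0)) :
    IntegrableOn (fun t : ℝ => t ^ p * (1 + t^2/s) ^ r) (Ioi 0) := by
  have hrs : (0:ℝ) < Real.sqrt s := Real.sqrt_pos.mpr hs
  have h1 : IntegrableOn (fun x : ℝ =>
      (fun t : ℝ => t ^ p * (1 + t^2/s) ^ r) (Real.sqrt s * x)) (Ioi 0) := by
    have h0 : IntegrableOn (fun x : ℝ => Real.sqrt s ^ p * (x ^ p * (1+x^2) ^ r)) (Ioi 0) :=
      h.const_mul _
    refine h0.congr_fun (fun x hx => ?_) measurableSet_Ioi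
    have hx0 : (0:ℝ) < x := hx
    simp only
    rw [Real.mul_rpow hrs.le hx0.le, mul_pow, Real.sq_sqrt hs.le]
    rw [show s * x^2 / s = x^2 by field_simp]
    ring
  have := (integrableOn_Ioi_comp_mul_left_iff
    (fun t : ℝ => t ^ p * (1 + t^2/s) ^ r) 0 hrs).mp h1
  rwa [mul_zero] at this

lemma one_sub_rpow_bounds (c x : ℝ) (hc : 0 < c) (hx : 0 ≤ x) :
    0 ≤ 1 - (1+x) ^ (-c) ∧ 1 - (1+x) ^ (-c) ≤ c * x := by
  have h1x : (0:ℝ) < 1 + x := by linarith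
  constructor
  · have : (1+x) ^ (-c) ≤ 1 :=
      Real.rpow_le_one_of_one_le_of_nonpos (by linarith) (by linarith)
    linarith
  · have hlog : Real.log (1+x) ≤ x := by
      have := Real.log_le_sub_one_of_pos h1x
      linarith
    have hrw : (1+x) ^ (-c) = Real.exp (-(c * Real.log (1+x))) := by
      rw [Real.rpow_def_of_pos h1x]; ring_nf
    have hexp : 1 - c * Real.log (1+x) ≤ Real.exp (-(c * Real.log (1+x))) := by
      have := Real.add_one_le_exp (-(c * Real.log (1+x)))
      linarith
    have hlog0 : 0 ≤ Real.log (1+x) := Real.log_nonneg (by linarith)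
    nlinarith [hrw, hexp, mul_le_mul_of_nonneg_left hlog hc.le]

end AuxLemmas

section Main
open Set

/-- **Evaluation of an auxiliary integral** (Lemma 2.3): for `s > 0` and `0 < q < 2`,
`∫₀^∞ (1 - (1 + t²/s)^{-(1+s)/2}) / t^{q+1} dt
  = (1/q) Γ(1 - q/2) Γ((1+q+s)/2) / (s^{q/2} Γ((1+s)/2))`. -/
theorem integral_one_sub_rpow_div
    (s q : ℝ) (hs : 0 < s) (hq : 0 < q) (hq' : q < 2) :
    ∫ t in Set.Ioi (0 : ℝ),
        (1 - (1 + t ^ 2 / s) ^ (-(1 + s) / 2)) / t ^ (q + 1)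
      = (1 / q) * Real.Gamma (1 - q / 2)
          * (Real.Gamma ((1 + q + s) / 2) / (s ^ (q / 2) * Real.Gamma ((1 + s) / 2))) := by
  set c : ℝ := (1 + s) / 2 with hc_def
  have hc : 0 < c := by rw [hc_def]; linarith
  set aa : ℝ := 1 - q/2 with haa_def
  set bb : ℝ := (1 + q + s) / 2 with hbb_def
  have haa : 0 < aa := by rw [haa_def]; linarith
  have hbb : 0 < bb := by rw [hbb_def]; linarith
  set u : ℝ → ℝ := fun t => 1 - (1 + t^2/s) ^ (-c) with hu_def
  set u' : ℝ → ℝ := fun t => 2*t/s * c * (1 + t^2/s) ^ (-c-1) with hu'_def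
  set v : ℝ → ℝ := fun t => -(t ^ (-q) / q) with hv_def
  set v' : ℝ → ℝ := fun t => t ^ (-q-1) with hv'_def
  have hw : ∀ t : ℝ, (0:ℝ) < 1 + t^2/s := fun t => by positivity
  have hud : ∀ t : ℝ, HasDerivAt u (u' t) t := by
    intro t
    have h1 : HasDerivAt (fun t : ℝ => 1 + t^2/s) (2*t/s) t := by
      simpa using ((hasDerivAt_pow 2 t).div_const s).const_add 1
    have h2 := h1.rpow_const (p := -c) (Or.inl (hw t).ne')
    have h3 := h2.const_sub 1
    refine h3.congr_deriv ?_
    rw [hu'_def]; ring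
  have hvd : ∀ t ∈ Ioi (0:ℝ), HasDerivAt v (v' t) t := by
    intro t ht
    have h1 := Real.hasDerivAt_rpow_const (x := t) (p := -q) (Or.inl (ne_of_gt ht))
    have h2 := (h1.div_const q).neg
    refine h2.congr_deriv ?_
    rw [hv'_def]
    field_simp
  -- bounds on u
  have hu_nonneg : ∀ t : ℝ, 0 ≤ u t := by
    intro t
    have := (one_sub_rpow_bounds c (t^2/s) hc (by positivity)).1
    simpa [hu_def] using this
  have hu_le : ∀ t : ℝ, u t ≤ c * (t^2/s) := by
    intro t
    have := (one_sub_rpow_bounds c (t^2/s) hc (by positivity)).2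
    simpa [hu_def] using this
  have hu_le_one : ∀ t : ℝ, u t ≤ 1 := by
    intro t
    have : (0:ℝ) < (1 + t^2/s) ^ (-c) := Real.rpow_pos_of_pos (hw t) _
    simp only [hu_def]; linarith
  -- continuity for measurability
  have hcont : ContinuousOn (fun t : ℝ => u t * v' t) (Ioi 0) := by
    apply ContinuousOn.mul
    · apply ContinuousOn.sub continuousOn_const
      apply ContinuousOn.rpow_const
      · exact (continuous_const.add ((continuous_pow 2).div_const s)).continuousOn
      · intro t _; exact Or.inl (hw t).ne'
    · apply ContinuousOn.rpow_const continuousOn_id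
      intro t ht; exact Or.inl (ne_of_gt ht)
  -- integrability of u * v' on Ioc 0 1
  have hInt1 : IntegrableOn (fun t : ℝ => u t * v' t) (Ioc 0 1) := by
    have hg : IntegrableOn (fun t : ℝ => (c/s) * t ^ (1-q)) (Ioc 0 1) := by
      have := intervalIntegral.intervalIntegrable_rpow' (a := 0) (b := 1)
        (r := 1-q) (by linarith)
      rw [intervalIntegrable_iff_integrableOn_Ioc_of_le (by norm_num : (0:ℝ) ≤ 1)] at this
      exact this.const_mul _
    refine Integrable.mono' hg ((hcont.mono Ioc_subset_Ioi_self).aestronglyMeasurable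
      measurableSet_Ioc) ?_
    rw [ae_restrict_iff' measurableSet_Ioc]
    refine ae_of_all _ (fun t ht => ?_)
    have ht0 : (0:ℝ) < t := ht.1
    have hkey : t^2 * t ^ (-q-1) = t ^ (1-q) := by
      rw [← Real.rpow_natCast t 2, ← Real.rpow_add ht0]
      congr 1
      all_goals (push_cast; ring)
    have hv'pos : (0:ℝ) ≤ t ^ (-q-1) := Real.rpow_nonneg ht0.le _
    rw [Real.norm_eq_abs, abs_of_nonneg (mul_nonneg (hu_nonneg t) hv'pos)]
    calc u t * v' t ≤ (c * (t^2/s)) * t ^ (-q-1) :=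
          mul_le_mul_of_nonneg_right (hu_le t) hv'pos
      _ = (c/s) * (t^2 * t ^ (-q-1)) := by ring
      _ = (c/s) * t ^ (1-q) := by rw [hkey]
  -- integrability of u * v' on Ioi 1
  have hInt2 : IntegrableOn (fun t : ℝ => u t * v' t) (Ioi 1) := by
    have hg : IntegrableOn (fun t : ℝ => t ^ (-q-1)) (Ioi 1) :=
      integrableOn_Ioi_rpow_of_lt (by linarith) one_pos
    refine Integrable.mono' hg ((hcont.mono (Ioi_subset_Ioi zero_le_one)).aestronglyMeasurable
      measurableSet_Ioi) ?_
    rw [ae_restrict_iff' measurableSet_Ioi]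
    refine ae_of_all _ (fun t ht => ?_)
    have ht0 : (0:ℝ) < t := lt_trans one_pos ht
    have hv'pos : (0:ℝ) ≤ t ^ (-q-1) := Real.rpow_nonneg ht0.le _
    rw [Real.norm_eq_abs, abs_of_nonneg (mul_nonneg (hu_nonneg t) hv'pos)]
    calc u t * v' t ≤ 1 * t ^ (-q-1) := mul_le_mul_of_nonneg_right (hu_le_one t) hv'pos
      _ = t ^ (-q-1) := one_mul _
  have huv' : IntegrableOn (u * v') (Ioi 0) := by
    have : IntegrableOn (fun t : ℝ => u t * v' t) (Ioi 0) := by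
      rw [show Ioi (0:ℝ) = Ioc 0 1 ∪ Ioi 1 from (Ioc_union_Ioi_eq_Ioi (by norm_num)).symm]
      exact hInt1.union hInt2
    exact this
  -- integrability of u' * v
  have hu'v_int0 : IntegrableOn
      (fun t : ℝ => t ^ (2*aa-1) * (1 + t^2/s) ^ (-(aa+bb))) (Ioi 0) :=
    scale_int s _ _ hs (J_int aa bb haa hbb)
  have hu'v_eq : ∀ t ∈ Ioi (0:ℝ),
      (-(2*c)/(s*q)) * (t ^ (2*aa-1) * (1 + t^2/s) ^ (-(aa+bb))) = u' t * v t := by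
    intro t ht
    have ht0 : (0:ℝ) < t := ht
    have h1 : t ^ (2*aa-1) = t * t ^ (-q) := by
      rw [show (2*aa-1 : ℝ) = 1 + (-q) by rw [haa_def]; ring,
        Real.rpow_add ht0, Real.rpow_one]
    have h2 : (-(aa+bb) : ℝ) = -c-1 := by rw [haa_def, hbb_def, hc_def]; ring
    rw [h1, h2, hu'_def, hv_def]
    field_simp
  have hu'v : IntegrableOn (u' * v) (Ioi 0) := by
    have h0 : IntegrableOn (fun t : ℝ =>
        (-(2*c))/(s*q) * (t ^ (2*aa-1) * (1 + t^2/s) ^ (-(aa+bb)))) (Ioi 0) :=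
      hu'v_int0.const_mul _
    refine h0.congr_fun (fun t ht => ?_) measurableSet_Ioi
    exact hu'v_eq t ht
  -- limit at 0
  have h_zero : Filter.Tendsto (u * v) (nhdsWithin 0 (Ioi 0)) (nhds 0) := by
    have hg : Filter.Tendsto (fun t : ℝ => (c/(s*q)) * t ^ (2-q))
        (nhdsWithin 0 (Ioi 0)) (nhds 0) := by
      have h1 : Filter.Tendsto (fun t : ℝ => t ^ (2-q)) (nhds 0) (nhds 0) := by
        have := (Real.continuousAt_rpow_const 0 (2-q) (Or.inr (by linarith))).tendsto
        simpa [Real.zero_rpow (by linarith : (2-q) ≠ 0)] using this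
      have h2 : Filter.Tendsto (fun t : ℝ => t ^ (2-q)) (nhdsWithin 0 (Ioi 0)) (nhds 0) :=
        h1.mono_left nhdsWithin_le_nhds
      have := h2.const_mul (c/(s*q))
      simpa using this
    refine squeeze_zero_norm' ?_ hg
    filter_upwards [self_mem_nhdsWithin] with t ht
    have ht0 : (0:ℝ) < t := ht
    have hvabs : |v t| = t ^ (-q) / q := by
      rw [hv_def, abs_neg, abs_of_nonneg (by positivity)]
    have hkey : t^2 * t ^ (-q) = t ^ (2-q) := by
      rw [← Real.rpow_natCast t 2, ← Real.rpow_add ht0]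
      congr 1
      all_goals (push_cast; ring)
    rw [Pi.mul_apply, Real.norm_eq_abs, abs_mul, abs_of_nonneg (hu_nonneg t), hvabs]
    calc u t * (t ^ (-q) / q) ≤ (c * (t^2/s)) * (t ^ (-q) / q) :=
          mul_le_mul_of_nonneg_right (hu_le t) (by positivity)
      _ = (c/(s*q)) * (t^2 * t ^ (-q)) := by field_simp
      _ = (c/(s*q)) * t ^ (2-q) := by rw [hkey]
  -- limit at ∞
  have h_infty : Filter.Tendsto (u * v) Filter.atTop (nhds 0) := by
    have hg : Filter.Tendsto (fun t : ℝ => (1/q) * t ^ (-q)) Filter.atTop (nhds 0) := by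
      have := (tendsto_rpow_neg_atTop hq).const_mul (1/q)
      simpa using this
    refine squeeze_zero_norm' ?_ hg
    filter_upwards [Filter.eventually_gt_atTop (0:ℝ)] with t ht0
    have hvabs : |v t| = t ^ (-q) / q := by
      rw [hv_def, abs_neg, abs_of_nonneg (by positivity)]
    rw [Pi.mul_apply, Real.norm_eq_abs, abs_mul, abs_of_nonneg (hu_nonneg t), hvabs]
    calc u t * (t ^ (-q) / q) ≤ 1 * (t ^ (-q) / q) :=
          mul_le_mul_of_nonneg_right (hu_le_one t) (by positivity)
      _ = (1/q) * t ^ (-q) := by ring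
  -- integration by parts
  have hibp := integral_Ioi_mul_deriv_eq_deriv_mul
    (fun t (ht : t ∈ Ioi (0:ℝ)) => hud t) hvd huv' hu'v h_zero h_infty
  -- rewrite LHS
  have hLHS : ∫ t in Ioi (0:ℝ), (1 - (1 + t ^ 2 / s) ^ (-(1 + s) / 2)) / t ^ (q + 1)
      = ∫ t in Ioi (0:ℝ), u t * v' t := by
    refine setIntegral_congr_fun measurableSet_Ioi (fun t ht => ?_)
    have ht0 : (0:ℝ) < t := ht
    rw [hu_def, hv'_def]
    simp only
    rw [div_eq_mul_inv, ← Real.rpow_neg ht0.le, show (-(q+1) : ℝ) = -q-1 by ring,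
      show (-(1+s)/2 : ℝ) = -c by rw [hc_def]; ring]
  -- compute the u' * v integral
  have hRHS : ∫ t in Ioi (0:ℝ), u' t * v t
      = (-(2*c)/(s*q)) * (s ^ ((2*aa-1+1)/2) *
          (Real.Gamma aa * Real.Gamma bb / (2 * Real.Gamma (aa+bb)))) := by
    rw [← J_val aa bb haa hbb, ← scale_eq s _ _ hs, ← integral_const_mul]
    refine setIntegral_congr_fun measurableSet_Ioi (fun t ht => (hu'v_eq t ht).symm)
  rw [hLHS, hibp, hRHS]
  -- final algebra
  have hGab : Real.Gamma (aa + bb) = c * Real.Gamma c := by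
    rw [show aa + bb = c + 1 by rw [haa_def, hbb_def, hc_def]; ring,
      Real.Gamma_add_one hc.ne']
  have hGc : 0 < Real.Gamma c := Real.Gamma_pos_of_pos hc
  have hsq : (0:ℝ) < s ^ (q/2) := Real.rpow_pos_of_pos hs _
  rw [hGab, show ((2*aa-1+1)/2 : ℝ) = 1 + (-(q/2)) by rw [haa_def]; ring,
    Real.rpow_add hs, Real.rpow_one, Real.rpow_neg hs.le]
  field_simp
  ring

end Main
end

section
/- For β > 0 define Ψ_β(x) = Γ(x + β + 1/2) / (x^β · Γ(x + 1/2)) for x > 0. Then for every β > 0, the function x ↦ Ψ_β(x) is strictly decreasing on (0, ∞) and Ψ_β(x) → 1 as x → ∞. -/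
open Filter Real

/-- The special function `Ψ_β(x) = Γ(x + β + 1/2) / (x^β Γ(x + 1/2))`. -/
noncomputable def Psi (β x : ℝ) : ℝ :=
  Real.Gamma (x + β + 1 / 2) / (x ^ β * Real.Gamma (x + 1 / 2))

namespace PsiAux

open Finset Topology

/-- The logarithm of `Psi`. -/
noncomputable def F (β x : ℝ) : ℝ :=
  Real.log (Real.Gamma (x + β + 1 / 2)) - Real.log (Real.Gamma (x + 1 / 2)) - β * Real.log x

/-- A strictly increasing "correction" function. -/
noncomputable def q (β t : ℝ) : ℝ :=
  Real.log t - Real.log (t + 1)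
    - (1 / β) * (Real.log (t + 1 / 2) - Real.log (t + β + 1 / 2))

/-- Finite approximations to `F`, coming from `logGammaSeq`. -/
noncomputable def g (β : ℝ) (n : ℕ) (t : ℝ) : ℝ :=
  -(β * Real.log t) +
    ∑ m ∈ Finset.range (n + 1), (Real.log (t + 1 / 2 + m) - Real.log (t + β + 1 / 2 + m))

/-- `g + β * q`, which is antitone. -/
noncomputable def P (β : ℝ) (n : ℕ) (t : ℝ) : ℝ :=
  (∑ m ∈ Finset.range (n + 1), (Real.log (t + 1 / 2 + m) - Real.log (t + β + 1 / 2 + m)))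
    - β * Real.log (t + 1) - Real.log (t + 1 / 2) + Real.log (t + β + 1 / 2)

lemma hasDerivAt_log_add (c t : ℝ) (h : 0 < t + c) :
    HasDerivAt (fun s : ℝ => Real.log (s + c)) (1 / (t + c)) t := by
  simpa using ((hasDerivAt_id t).add_const c).log h.ne'

lemma hasDerivAt_log_add3 (b c t : ℝ) (h : 0 < t + b + c) :
    HasDerivAt (fun s : ℝ => Real.log (s + b + c)) (1 / (t + b + c)) t := by
  have h' : 0 < t + (b + c) := by rw [← add_assoc]; exact h
  simpa only [← add_assoc] using hasDerivAt_log_add (b + c) t h'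

lemma hasDerivAt_log_add4 (b c d t : ℝ) (h : 0 < t + b + c + d) :
    HasDerivAt (fun s : ℝ => Real.log (s + b + c + d)) (1 / (t + b + c + d)) t := by
  have h' : 0 < t + (b + c + d) := by rw [show t + (b + c + d) = t + b + c + d by ring]; exact h
  simpa only [← add_assoc] using hasDerivAt_log_add (b + c + d) t h'

lemma hasDerivAt_q {β t : ℝ} (hβ : 0 < β) (ht : 0 < t) :
    HasDerivAt (q β)
      (1 / t - 1 / (t + 1) - (1 / β) * (1 / (t + 1 / 2) - 1 / (t + β + 1 / 2))) t := by
  have h1 : HasDerivAt (fun s : ℝ => Real.log s) (1 / t) t := by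
    simpa [one_div] using Real.hasDerivAt_log ht.ne'
  have h2 := hasDerivAt_log_add 1 t (by linarith)
  have h3 := hasDerivAt_log_add (1 / 2) t (by linarith)
  have h4 := hasDerivAt_log_add3 β (1 / 2) t (by linarith)
  exact (h1.sub h2).sub ((h3.sub h4).const_mul (1 / β))

lemma q_deriv_pos {β t : ℝ} (hβ : 0 < β) (ht : 0 < t) :
    0 < 1 / t - 1 / (t + 1) - (1 / β) * (1 / (t + 1 / 2) - 1 / (t + β + 1 / 2)) := by
  have e1 : 1 / t - 1 / (t + 1) = 1 / (t * (t + 1)) := by field_simp; ring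
  have e2 : (1 / β) * (1 / (t + 1 / 2) - 1 / (t + β + 1 / 2))
      = 1 / ((t + 1 / 2) * (t + β + 1 / 2)) := by
    field_simp
    ring
  rw [e1, e2, sub_pos]
  apply one_div_lt_one_div_of_lt
  · positivity
  · nlinarith

lemma q_strictMonoOn {β : ℝ} (hβ : 0 < β) : StrictMonoOn (q β) (Set.Ioi 0) := by
  apply strictMonoOn_of_deriv_pos (convex_Ioi 0)
  · intro t ht
    exact (hasDerivAt_q hβ ht).continuousAt.continuousWithinAt
  · intro t ht
    rw [interior_Ioi] at ht
    rw [(hasDerivAt_q hβ ht).deriv]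
    exact q_deriv_pos hβ ht

lemma hasDerivAt_P {β t : ℝ} (hβ : 0 < β) (ht : 0 < t) (n : ℕ) :
    HasDerivAt (P β n)
      ((∑ m ∈ Finset.range (n + 1), (1 / (t + 1 / 2 + m) - 1 / (t + β + 1 / 2 + m)))
        - β * (1 / (t + 1)) - 1 / (t + 1 / 2) + 1 / (t + β + 1 / 2)) t := by
  have hsum : HasDerivAt
      (fun s : ℝ => ∑ m ∈ Finset.range (n + 1),
        (Real.log (s + 1 / 2 + m) - Real.log (s + β + 1 / 2 + m)))
      (∑ m ∈ Finset.range (n + 1), (1 / (t + 1 / 2 + m) - 1 / (t + β + 1 / 2 + m))) t := by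
    apply HasDerivAt.fun_sum
    intro m _
    have hm : (0 : ℝ) ≤ m := Nat.cast_nonneg m
    exact (hasDerivAt_log_add3 (1 / 2) m t (by linarith)).sub
      (hasDerivAt_log_add4 β (1 / 2) m t (by linarith))
  have h2 := hasDerivAt_log_add 1 t (by linarith)
  have h3 := hasDerivAt_log_add (1 / 2) t (by linarith)
  have h4 := hasDerivAt_log_add3 β (1 / 2) t (by linarith)
  exact ((hsum.sub (h2.const_mul β)).sub h3).add h4

lemma P_deriv_nonpos {β t : ℝ} (hβ : 0 < β) (ht : 0 < t) (n : ℕ) :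
    (∑ m ∈ Finset.range (n + 1), (1 / (t + 1 / 2 + m) - 1 / (t + β + 1 / 2 + m)))
      - β * (1 / (t + 1)) - 1 / (t + 1 / 2) + 1 / (t + β + 1 / 2) ≤ 0 := by
  rw [Finset.sum_range_succ' (fun m : ℕ =>
    (1 / (t + 1 / 2 + (m : ℝ)) - 1 / (t + β + 1 / 2 + (m : ℝ)))) n]
  push_cast
  have key : ∑ m ∈ Finset.range n,
      (1 / (t + 1 / 2 + ((m : ℝ) + 1)) - 1 / (t + β + 1 / 2 + ((m : ℝ) + 1)))
      ≤ β * (1 / (t + 1)) := by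
    have hterm : ∀ m ∈ Finset.range n,
        1 / (t + 1 / 2 + ((m : ℝ) + 1)) - 1 / (t + β + 1 / 2 + ((m : ℝ) + 1))
          ≤ β * (1 / (t + 1 + m) - 1 / (t + 1 + (m + 1 : ℕ))) := by
      intro m _
      have hm : (0 : ℝ) ≤ m := Nat.cast_nonneg m
      have hA : (0 : ℝ) < t + 1 / 2 + ((m : ℝ) + 1) := by linarith
      have hB : (0 : ℝ) < t + β + 1 / 2 + ((m : ℝ) + 1) := by linarith
      have ha : (0 : ℝ) < t + 1 + m := by linarith
      have hb : (0 : ℝ) < t + 1 + ((m : ℕ) + 1 : ℕ) := by push_cast; linarith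
      have e1 : 1 / (t + 1 / 2 + ((m : ℝ) + 1)) - 1 / (t + β + 1 / 2 + ((m : ℝ) + 1))
          = β / ((t + 1 / 2 + ((m : ℝ) + 1)) * (t + β + 1 / 2 + ((m : ℝ) + 1))) := by
        field_simp
        ring
      have hb' : (0 : ℝ) < t + 2 + m := by linarith
      have e2 : 1 / (t + 1 + (m : ℝ)) - 1 / (t + 1 + ((m : ℕ) + 1 : ℕ))
          = 1 / ((t + 1 + (m : ℝ)) * (t + 2 + (m : ℝ))) := by
        push_cast
        rw [div_sub_div _ _ ha.ne' (by linarith : t + 1 + ((m : ℝ) + 1) ≠ 0)]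
        congr 1 <;> ring
      rw [e1, e2, mul_one_div]
      have hab : (t + 1 + (m : ℝ)) * (t + 2 + (m : ℝ))
          ≤ (t + 1 / 2 + ((m : ℝ) + 1)) * (t + β + 1 / 2 + ((m : ℝ) + 1)) := by
        nlinarith
      exact div_le_div_of_nonneg_left hβ.le (by positivity) hab
    calc ∑ m ∈ Finset.range n,
        (1 / (t + 1 / 2 + ((m : ℝ) + 1)) - 1 / (t + β + 1 / 2 + ((m : ℝ) + 1)))
        ≤ ∑ m ∈ Finset.range n, β * (1 / (t + 1 + m) - 1 / (t + 1 + (m + 1 : ℕ))) :=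
          Finset.sum_le_sum hterm
      _ = β * ∑ m ∈ Finset.range n,
            ((fun k : ℕ => 1 / (t + 1 + (k : ℝ))) m - (fun k : ℕ => 1 / (t + 1 + (k : ℝ))) (m + 1)) := by
          rw [← Finset.mul_sum]
      _ = β * (1 / (t + 1 + (0 : ℕ)) - 1 / (t + 1 + (n : ℝ))) := by
          rw [Finset.sum_range_sub' (fun k : ℕ => 1 / (t + 1 + (k : ℝ))) n]
      _ ≤ β * (1 / (t + 1)) := by
          have hn : (0 : ℝ) ≤ n := Nat.cast_nonneg n
          have hpos : (0 : ℝ) < t + 1 + n := by linarith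
          have h1 : 0 ≤ 1 / (t + 1 + (n : ℝ)) := by positivity
          push_cast
          have h2 : 1 / (t + 1 + (0 : ℝ)) - 1 / (t + 1 + (n : ℝ)) ≤ 1 / (t + 1) := by
            rw [add_zero]
            linarith
          exact mul_le_mul_of_nonneg_left h2 hβ.le
  simp only [add_zero] at *
  linarith

lemma P_antitoneOn {β : ℝ} (hβ : 0 < β) (n : ℕ) : AntitoneOn (P β n) (Set.Ioi 0) := by
  apply antitoneOn_of_deriv_nonpos (convex_Ioi 0)
  · intro t ht
    exact (hasDerivAt_P hβ ht n).continuousAt.continuousWithinAt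
  · intro t ht
    rw [interior_Ioi] at ht
    exact (hasDerivAt_P hβ ht n).differentiableAt.differentiableWithinAt
  · intro t ht
    rw [interior_Ioi] at ht
    rw [(hasDerivAt_P hβ ht n).deriv]
    exact P_deriv_nonpos hβ ht n

lemma P_eq_g_add {β : ℝ} (hβ : 0 < β) (n : ℕ) (t : ℝ) :
    P β n t = g β n t + β * q β t := by
  unfold P g q
  field_simp
  ring

lemma g_sub_ge {β x y : ℝ} (hβ : 0 < β) (hx : 0 < x) (hxy : x < y) (n : ℕ) :
    β * (q β y - q β x) ≤ g β n x - g β n y := by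
  have hy : 0 < y := hx.trans hxy
  have hP := P_antitoneOn hβ n (Set.mem_Ioi.2 hx) (Set.mem_Ioi.2 hy) hxy.le
  have hq := q_strictMonoOn hβ (Set.mem_Ioi.2 hx) (Set.mem_Ioi.2 hy) hxy
  rw [P_eq_g_add hβ n x, P_eq_g_add hβ n y] at hP
  linarith

lemma g_sub_eq (β x y : ℝ) (n : ℕ) :
    g β n x - g β n y =
      ((Real.BohrMollerup.logGammaSeq (x + β + 1 / 2) n
          - Real.BohrMollerup.logGammaSeq (x + 1 / 2) n)
        - (Real.BohrMollerup.logGammaSeq (y + β + 1 / 2) n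
          - Real.BohrMollerup.logGammaSeq (y + 1 / 2) n))
      - β * Real.log x + β * Real.log y := by
  simp only [Real.BohrMollerup.logGammaSeq, g, Finset.sum_sub_distrib]
  ring

lemma F_sub_ge {β x y : ℝ} (hβ : 0 < β) (hx : 0 < x) (hxy : x < y) :
    β * (q β y - q β x) ≤ F β x - F β y := by
  have hy : 0 < y := hx.trans hxy
  have t1 := Real.BohrMollerup.tendsto_log_gamma (show (0:ℝ) < x + β + 1 / 2 by linarith)
  have t2 := Real.BohrMollerup.tendsto_log_gamma (show (0:ℝ) < x + 1 / 2 by linarith)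
  have t3 := Real.BohrMollerup.tendsto_log_gamma (show (0:ℝ) < y + β + 1 / 2 by linarith)
  have t4 := Real.BohrMollerup.tendsto_log_gamma (show (0:ℝ) < y + 1 / 2 by linarith)
  have hT : Tendsto (fun n => g β n x - g β n y) atTop (𝓝 (F β x - F β y)) := by
    have h := (((t1.sub t2).sub (t3.sub t4)).sub_const (β * Real.log x)).add_const
      (β * Real.log y)
    have hval : F β x - F β y =
        (Real.log (Real.Gamma (x + β + 1 / 2)) - Real.log (Real.Gamma (x + 1 / 2))
          - (Real.log (Real.Gamma (y + β + 1 / 2)) - Real.log (Real.Gamma (y + 1 / 2))))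
        - β * Real.log x + β * Real.log y := by
      unfold F; ring
    rw [hval]
    refine h.congr fun n => ?_
    rw [g_sub_eq]
  exact ge_of_tendsto' hT fun n => g_sub_ge hβ hx hxy n

lemma Psi_eq_exp {β t : ℝ} (hβ : 0 < β) (ht : 0 < t) : Psi β t = Real.exp (F β t) := by
  have h1 : 0 < Real.Gamma (t + β + 1 / 2) := Real.Gamma_pos_of_pos (by linarith)
  have h2 : 0 < Real.Gamma (t + 1 / 2) := Real.Gamma_pos_of_pos (by linarith)
  rw [F, Real.exp_sub, Real.exp_sub, Real.exp_log h1, Real.exp_log h2]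
  have h3 : Real.exp (β * Real.log t) = t ^ β := by
    rw [Real.rpow_def_of_pos ht, mul_comm]
  rw [h3, Psi, div_div]
  ring

lemma tendsto_log_ratio (c : ℝ) :
    Tendsto (fun x : ℝ => Real.log (x + c) - Real.log x) atTop (𝓝 0) := by
  have h0 : Tendsto (fun x : ℝ => c / x) atTop (𝓝 0) := tendsto_const_nhds.div_atTop tendsto_id
  have h1 : Tendsto (fun x : ℝ => 1 + c / x) atTop (𝓝 (1 + 0)) := tendsto_const_nhds.add h0
  rw [add_zero] at h1
  have h2 : Tendsto (fun x : ℝ => Real.log (1 + c / x)) atTop (𝓝 (Real.log 1)) :=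
    (Real.continuousAt_log one_ne_zero).tendsto.comp h1
  rw [Real.log_one] at h2
  refine h2.congr' ?_
  filter_upwards [eventually_gt_atTop (0 : ℝ), eventually_gt_atTop (-c)] with x hx hxc
  have hxc' : (0 : ℝ) < x + c := by linarith
  rw [show 1 + c / x = (x + c) / x by field_simp, Real.log_div hxc'.ne' hx.ne']

lemma F_le {β x : ℝ} (hβ : 0 < β) (hβ1 : β ≤ 1) (hx : 0 < x) :
    F β x ≤ β * (Real.log (x + 1 / 2) - Real.log x) := by
  have hu : (0:ℝ) < x + 1 / 2 := by linarith
  have hc := Real.convexOn_log_Gamma.2 (Set.mem_Ioi.2 hu)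
    (Set.mem_Ioi.2 (by linarith : (0:ℝ) < x + 1 / 2 + 1))
    (by linarith : (0:ℝ) ≤ 1 - β) hβ.le (by ring)
  simp only [smul_eq_mul, Function.comp_apply] at hc
  rw [show (1 - β) * (x + 1 / 2) + β * (x + 1 / 2 + 1) = x + β + 1 / 2 by ring] at hc
  rw [Real.Gamma_add_one hu.ne', Real.log_mul hu.ne' (Real.Gamma_pos_of_pos hu).ne'] at hc
  unfold F
  linarith

lemma F_ge {β x : ℝ} (hβ : 0 < β) (hβ1 : β ≤ 1) (hx : 1 / 2 < x) :
    β * (Real.log (x + (β - 1 / 2)) - Real.log x) ≤ F β x := by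
  have hv : (0:ℝ) < x + β - 1 / 2 := by linarith
  have hw : (0:ℝ) < x + β + 1 / 2 := by linarith
  have hc := Real.convexOn_log_Gamma.2 (Set.mem_Ioi.2 hw) (Set.mem_Ioi.2 hv)
    (by linarith : (0:ℝ) ≤ 1 - β) hβ.le (by ring)
  simp only [smul_eq_mul, Function.comp_apply] at hc
  rw [show (1 - β) * (x + β + 1 / 2) + β * (x + β - 1 / 2) = x + 1 / 2 by ring] at hc
  have hΓ : Real.Gamma (x + β + 1 / 2) = (x + β - 1 / 2) * Real.Gamma (x + β - 1 / 2) := by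
    rw [show x + β + 1 / 2 = (x + β - 1 / 2) + 1 by ring, Real.Gamma_add_one hv.ne']
  have hlog : Real.log (Real.Gamma (x + β - 1 / 2))
      = Real.log (Real.Gamma (x + β + 1 / 2)) - Real.log (x + β - 1 / 2) := by
    rw [hΓ, Real.log_mul hv.ne' (Real.Gamma_pos_of_pos hv).ne']
    ring
  rw [hlog] at hc
  unfold F
  rw [show x + (β - 1 / 2) = x + β - 1 / 2 by ring]
  linarith

lemma F_tendsto_base {β : ℝ} (hβ : 0 < β) (hβ1 : β ≤ 1) :
    Tendsto (F β) atTop (𝓝 0) := by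
  have hlo := (tendsto_log_ratio (β - 1 / 2)).const_mul β
  have hhi := (tendsto_log_ratio (1 / 2)).const_mul β
  rw [mul_zero] at hlo hhi
  refine tendsto_of_tendsto_of_tendsto_of_le_of_le' hlo hhi ?_ ?_
  · filter_upwards [eventually_gt_atTop (1 / 2 : ℝ)] with x hx
    exact F_ge hβ hβ1 hx
  · filter_upwards [eventually_gt_atTop (0 : ℝ)] with x hx
    exact F_le hβ hβ1 hx

lemma F_add_one {β : ℝ} (hβ : 0 < β) {x : ℝ} (hx : 0 < x) :
    F (β + 1) x = F β x + (Real.log (x + β + 1 / 2) - Real.log x) := by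
  have hv : (0:ℝ) < x + β + 1 / 2 := by linarith
  have hΓ : Real.Gamma (x + (β + 1) + 1 / 2) = (x + β + 1 / 2) * Real.Gamma (x + β + 1 / 2) := by
    rw [show x + (β + 1) + 1 / 2 = (x + β + 1 / 2) + 1 by ring, Real.Gamma_add_one hv.ne']
  unfold F
  rw [hΓ, Real.log_mul hv.ne' (Real.Gamma_pos_of_pos hv).ne']
  ring

lemma F_tendsto_aux : ∀ n : ℕ, ∀ β : ℝ, 0 < β → β ≤ n → Tendsto (F β) atTop (𝓝 0) := by
  intro n
  induction n with
  | zero =>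
    intro β hβ hle
    norm_num at hle
    linarith
  | succ n ih =>
    intro β hβ hle
    by_cases h1 : β ≤ 1
    · exact F_tendsto_base hβ h1
    · push_neg at h1
      have hγ : 0 < β - 1 := by linarith
      have hγn : β - 1 ≤ n := by
        push_cast at hle ⊢
        linarith
      have hT := (ih (β - 1) hγ hγn).add (tendsto_log_ratio (β - 1 + 1 / 2))
      rw [add_zero] at hT
      rw [show β = β - 1 + 1 by ring]
      refine hT.congr' ?_
      filter_upwards [eventually_gt_atTop (0 : ℝ)] with x hx
      rw [F_add_one hγ hx, show x + (β - 1 + 1 / 2) = x + (β - 1) + 1 / 2 by ring]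

lemma F_tendsto {β : ℝ} (hβ : 0 < β) : Tendsto (F β) atTop (𝓝 0) :=
  F_tendsto_aux ⌈β⌉₊ β hβ (Nat.le_ceil β)

end PsiAux

/-- **Monotonicity of the special function `Ψ_β`** (Lemma 2.4): for every `β > 0`,
`x ↦ Ψ_β(x)` is strictly decreasing on `(0, ∞)` and `Ψ_β(x) → 1` as `x → ∞`. -/
theorem psi_strictAntiOn_and_tendsto_one (β : ℝ) (hβ : 0 < β) :
    StrictAntiOn (fun x => Psi β x) (Set.Ioi 0)
    ∧ Tendsto (fun x => Psi β x) atTop (nhds 1) := by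
  constructor
  · intro x hx y hy hxy
    have hx' : (0:ℝ) < x := hx
    have hq := PsiAux.q_strictMonoOn hβ hx hy hxy
    have hF := PsiAux.F_sub_ge hβ hx' hxy
    have hpos := mul_pos hβ (sub_pos.2 hq)
    have hlt : PsiAux.F β y < PsiAux.F β x := by linarith
    show Psi β y < Psi β x
    rw [PsiAux.Psi_eq_exp hβ hx', PsiAux.Psi_eq_exp hβ (hx'.trans hxy)]
    exact Real.exp_lt_exp.2 hlt
  · have h2 : Filter.Tendsto (fun x => Real.exp (PsiAux.F β x)) atTop (nhds (Real.exp 0)) :=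
      (Real.continuous_exp.tendsto 0).comp (PsiAux.F_tendsto hβ)
    rw [Real.exp_zero] at h2
    refine h2.congr' ?_
    filter_upwards [eventually_gt_atTop (0:ℝ)] with x hx
    show Real.exp (PsiAux.F β x) = Psi β x
    rw [PsiAux.Psi_eq_exp hβ hx]
end

section
/- For β > 0 define R_β(x) = (1 + 1/x)^β · (x + 1/2)/(x + β + 1/2) for x > 0. Then for every β > 0, the function x ↦ R_β(x) is strictly decreasing on (0, ∞). -/
open Real

lemma R_hasDerivAt (β : ℝ) (hβ : 0 < β) (x : ℝ) (hx : 0 < x) :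
    HasDerivAt (fun x : ℝ => (1 + 1 / x) ^ β * ((x + 1 / 2) / (x + β + 1 / 2)))
      ((-(x ^ 2)⁻¹ * β * (1 + 1 / x) ^ (β - 1)) * ((x + 1 / 2) / (x + β + 1 / 2)) +
        (1 + 1 / x) ^ β *
          ((1 * (x + β + 1 / 2) - (x + 1 / 2) * 1) / (x + β + 1 / 2) ^ 2)) x := by
  have hx0 : x ≠ 0 := ne_of_gt hx
  have hc : x + β + 1 / 2 ≠ 0 := by positivity
  have hu : (0 : ℝ) < 1 + 1 / x := by positivity
  have h1 : HasDerivAt (fun x : ℝ => 1 + 1 / x) (-(x ^ 2)⁻¹) x := by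
    simpa using ((hasDerivAt_inv hx0).const_add 1)
  have h2 : HasDerivAt (fun x : ℝ => (1 + 1 / x) ^ β)
      (-(x ^ 2)⁻¹ * β * (1 + 1 / x) ^ (β - 1)) x :=
    h1.rpow_const (Or.inl (ne_of_gt hu))
  have h3 : HasDerivAt (fun x : ℝ => (x + 1 / 2) / (x + β + 1 / 2))
      ((1 * (x + β + 1 / 2) - (x + 1 / 2) * 1) / (x + β + 1 / 2) ^ 2) x := by
    exact ((hasDerivAt_id x).add_const (1 / 2)).div
      (((hasDerivAt_id x).add_const β).add_const (1 / 2)) hc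
  exact h2.mul h3

/-- **The ratio function `R_β` is strictly decreasing** (claim in Lemma 2.4): for every
`β > 0`, the function `R_β(x) = (1 + 1/x)^β (x + 1/2)/(x + β + 1/2)` is strictly
decreasing on `(0, ∞)`. -/
theorem R_strictAntiOn (β : ℝ) (hβ : 0 < β) :
    StrictAntiOn
      (fun x : ℝ => (1 + 1 / x) ^ β * ((x + 1 / 2) / (x + β + 1 / 2)))
      (Set.Ioi 0) := by
  apply strictAntiOn_of_deriv_neg (convex_Ioi 0)
  · exact fun x hx => (R_hasDerivAt β hβ x hx).continuousAt.continuousWithinAt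
  · intro x hx
    rw [interior_Ioi] at hx
    have hx : (0 : ℝ) < x := hx
    rw [(R_hasDerivAt β hβ x hx).deriv]
    have hx0 : x ≠ 0 := ne_of_gt hx
    have hcpos : (0 : ℝ) < x + β + 1 / 2 := by positivity
    have hc : x + β + 1 / 2 ≠ 0 := ne_of_gt hcpos
    have hu : (0 : ℝ) < 1 + 1 / x := by positivity
    have hsplit : (1 + 1 / x) ^ β = (1 + 1 / x) ^ (β - 1) * (1 + 1 / x) := by
      rw [← Real.rpow_add_one (ne_of_gt hu)]
      ring_nf
    rw [hsplit]
    have key : (-(x ^ 2)⁻¹ * β * (1 + 1 / x) ^ (β - 1)) * ((x + 1 / 2) / (x + β + 1 / 2)) +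
        (1 + 1 / x) ^ (β - 1) * (1 + 1 / x) *
          ((1 * (x + β + 1 / 2) - (x + 1 / 2) * 1) / (x + β + 1 / 2) ^ 2)
        = (1 + 1 / x) ^ (β - 1) *
          (-(β * (β * x + β / 2 + 1 / 4)) / (x ^ 2 * (x + β + 1 / 2) ^ 2)) := by
      field_simp
      ring
    rw [key]
    apply mul_neg_of_pos_of_neg (Real.rpow_pos_of_pos hu _)
    have : 0 < β * (β * x + β / 2 + 1 / 4) / (x ^ 2 * (x + β + 1 / 2) ^ 2) := by positivity
    rw [neg_div]
    linarith
end

section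
/- For β > 0 define Ψ_β(x) = Γ(x + β + 1/2)/(x^β · Γ(x + 1/2)) and R_β(x) = (1 + 1/x)^β · (x + 1/2)/(x + β + 1/2) for x > 0. Then for every β > 0 and x > 0, the infinite product Π_{k=0}^∞ R_β(x + k) converges and equals Ψ_β(x). -/
open Filter Real

/-- The ratio function `R_β(x) = (1 + 1/x)^β (x + 1/2)/(x + β + 1/2)`. -/
noncomputable def Rfun (β x : ℝ) : ℝ :=
  (1 + 1 / x) ^ β * ((x + 1 / 2) / (x + β + 1 / 2))

lemma telescope (x : ℝ) (hx : 0 < x) (N : ℕ) :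
    ∏ k ∈ Finset.range N, (x + k + 1) / (x + k) = (x + N) / x := by
  induction N with
  | zero => simp [div_self hx.ne']
  | succ n ih =>
    rw [Finset.prod_range_succ, ih]
    have h1 : (0:ℝ) < x + n := by positivity
    field_simp
    push_cast
    ring

lemma prod_Rfun_eq (β x : ℝ) (hβ : 0 < β) (hx : 0 < x) (N : ℕ) :
    ∏ k ∈ Finset.range N, Rfun β (x + k) =
      ((x + N) / x) ^ β * ((∏ k ∈ Finset.range N, (x + 1 / 2 + k)) /
        (∏ k ∈ Finset.range N, (x + β + 1 / 2 + k))) := by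
  have key : ∀ k ∈ Finset.range N, Rfun β (x + k) =
      ((x + k + 1) / (x + k)) ^ β * ((x + 1/2 + k) / (x + β + 1/2 + k)) := by
    intro k _
    have h1 : (0:ℝ) < x + k := by positivity
    unfold Rfun
    rw [one_add_div h1.ne']
    ring_nf
  rw [Finset.prod_congr rfl key, Finset.prod_mul_distrib,
    Real.finset_prod_rpow _ _ (fun k _ => by positivity),
    telescope x hx, Finset.prod_div_distrib]

/-- **Infinite-product representation of `Ψ_β`** (step in the proof of Lemma 2.4):
for every `β > 0` and `x > 0`, the infinite product `∏_{k=0}^∞ R_β(x + k)` converges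
and equals `Ψ_β(x)`. -/
theorem psi_eq_infinite_product (β x : ℝ) (hβ : 0 < β) (hx : 0 < x) :
    Tendsto (fun N => ∏ k ∈ Finset.range N, Rfun β (x + k)) atTop (nhds (Psi β x)) := by
  set a := x + β + 1 / 2 with ha
  set b := x + 1 / 2 with hb
  have hb0 : (0:ℝ) < b := by rw [hb]; linarith
  have ha0 : (0:ℝ) < a := by rw [ha]; linarith
  rw [← tendsto_add_atTop_iff_nat 1]
  have key : ∀ n : ℕ, 1 ≤ n →
      ∏ k ∈ Finset.range (n + 1), Rfun β (x + k) =
        ((x + n + 1) / n) ^ β * x ^ (-β) *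
          (Real.GammaSeq a n / Real.GammaSeq b n) := by
    intro n hn
    have hn0 : (0:ℝ) < n := by exact_mod_cast hn
    have hprodb : (0:ℝ) < ∏ k ∈ Finset.range (n + 1), (b + k) := by
      apply Finset.prod_pos; intro k _; positivity
    have hproda : (0:ℝ) < ∏ k ∈ Finset.range (n + 1), (a + k) := by
      apply Finset.prod_pos; intro k _; positivity
    have hfact : (0:ℝ) < ((Nat.factorial n : ℕ) : ℝ) := by exact_mod_cast Nat.factorial_pos n
    rw [prod_Rfun_eq β x hβ hx]
    have hratio : Real.GammaSeq a n / Real.GammaSeq b n =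
        (n:ℝ) ^ β * ((∏ k ∈ Finset.range (n + 1), (b + k)) /
          (∏ k ∈ Finset.range (n + 1), (a + k))) := by
      rw [Real.GammaSeq, Real.GammaSeq]
      rw [div_div_div_comm]
      rw [mul_div_mul_right _ _ hfact.ne']
      have hab : (n:ℝ) ^ a = (n:ℝ) ^ β * (n:ℝ) ^ b := by
        rw [← Real.rpow_add hn0]; congr 1; rw [ha, hb]; ring
      have hnb : (0:ℝ) < (n:ℝ) ^ b := Real.rpow_pos_of_pos hn0 b
      rw [hab]
      field_simp
    rw [hratio]
    have hnb : (0:ℝ) < (n:ℝ) ^ β := Real.rpow_pos_of_pos hn0 β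
    have e1 : ((x + (n+1:ℕ)) / x) ^ β = ((x + n + 1) / n) ^ β * x ^ (-β) * (n:ℝ) ^ β := by
      rw [Real.div_rpow (by positivity) hx.le, Real.div_rpow (by positivity) hn0.le,
        Real.rpow_neg hx.le]
      push_cast
      field_simp
      ring
    rw [e1]
    ring
  refine Tendsto.congr' (Filter.eventually_atTop.mpr ⟨1, fun n hn => (key n hn).symm⟩) ?_
  have hG : Tendsto (fun n : ℕ => Real.GammaSeq a n / Real.GammaSeq b n) atTop
      (nhds (Real.Gamma a / Real.Gamma b)) :=
    (Real.GammaSeq_tendsto_Gamma a).div (Real.GammaSeq_tendsto_Gamma b)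
      (Real.Gamma_pos_of_pos hb0).ne'
  have hq : Tendsto (fun n : ℕ => ((x + n + 1) / n) ^ β) atTop (nhds 1) := by
    have h1 : Tendsto (fun n : ℕ => (x + n + 1) / n) atTop (nhds 1) := by
      have : ∀ᶠ n : ℕ in atTop, (x + n + 1) / n = (x + 1) / n + 1 := by
        filter_upwards [Filter.eventually_gt_atTop 0] with n hn
        have hn0 : (0:ℝ) < n := by exact_mod_cast hn
        field_simp
        ring
      rw [Filter.tendsto_congr' this]
      simpa using (tendsto_const_div_atTop_nhds_zero_nat (x + 1)).add tendsto_const_nhds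
    have hc : ContinuousAt (fun y : ℝ => y ^ β) 1 :=
      Real.continuousAt_rpow_const 1 β (Or.inl one_ne_zero)
    simpa [Function.comp_def] using hc.tendsto.comp h1
  have hT := (hq.mul (tendsto_const_nhds (x := x ^ (-β)))).mul hG
  have hΓb : Real.Gamma b ≠ 0 := (Real.Gamma_pos_of_pos hb0).ne'
  have hval : Psi β x = 1 * x ^ (-β) * (Real.Gamma a / Real.Gamma b) := by
    simp only [Psi, ha, hb, Real.rpow_neg hx.le, one_mul]
    have hxb : x ^ β ≠ 0 := (Real.rpow_pos_of_pos hx β).ne'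
    field_simp
  rw [hval]
  exact hT
end

section
/- Let k be a nonnegative integer and k < p < k+1. Define Q_k(t) = (−1)^{k+1}·(e^{−t} − Σ_{j=0}^k (−1)^j t^j / j!) for t > 0. Then: (i) Q_k(t) > 0 for all t > 0; (ii) the integral C_p = ∫_0^∞ Q_k(t)·t^{−p−1} dt converges (to a finite positive number); and (iii) for every x > 0, x^p = C_p^{−1} · ∫_0^∞ Q_k(t·x)·t^{−p−1} dt. -/
open MeasureTheory Real

/-- `Q_k(t) = (-1)^{k+1} (e^{-t} - ∑_{j=0}^k (-1)^j t^j / j!)`. -/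
noncomputable def Q (k : ℕ) (t : ℝ) : ℝ :=
  (-1) ^ (k + 1) *
    (Real.exp (-t) - ∑ j ∈ Finset.range (k + 1), (-1) ^ j * t ^ j / (Nat.factorial j))

lemma Q_continuous (k : ℕ) : Continuous (Q k) := by
  unfold Q
  fun_prop

lemma sum_hasDerivAt (k : ℕ) (t : ℝ) :
    HasDerivAt (fun t : ℝ => ∑ j ∈ Finset.range (k + 1 + 1), (-1 : ℝ) ^ j * t ^ j / (Nat.factorial j))
      (-(∑ j ∈ Finset.range (k + 1), (-1 : ℝ) ^ j * t ^ j / (Nat.factorial j))) t := by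
  have h : ∀ j ∈ Finset.range (k + 1 + 1),
      HasDerivAt (fun t : ℝ => (-1 : ℝ) ^ j * t ^ j / (Nat.factorial j))
        ((-1 : ℝ) ^ j * (j * t ^ (j - 1)) / (Nat.factorial j)) t := fun j _ =>
    ((hasDerivAt_pow j t).const_mul ((-1 : ℝ) ^ j)).div_const _
  have := HasDerivAt.fun_sum h
  convert this using 1
  · rfl
  · rfl
  conv_rhs => rw [Finset.sum_range_succ']
  simp only [pow_zero, Nat.factorial_zero, Nat.cast_zero, zero_mul, mul_zero, zero_div, add_zero]
  rw [neg_eq_iff_eq_neg, ← Finset.sum_neg_distrib]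
  apply Finset.sum_congr rfl
  intro j _
  have hfac : (Nat.factorial (j + 1) : ℝ) = (j + 1) * Nat.factorial j := by
    rw [Nat.factorial_succ]; push_cast; ring
  have hj : (Nat.factorial j : ℝ) ≠ 0 := Nat.cast_ne_zero.mpr (Nat.factorial_ne_zero j)
  have hj1 : (j : ℝ) + 1 ≠ 0 := by positivity
  simp only [Nat.add_sub_cancel, pow_succ, hfac]
  push_cast
  field_simp

lemma Q_hasDerivAt (k : ℕ) (t : ℝ) : HasDerivAt (Q (k + 1)) (Q k t) t := by
  have hexp : HasDerivAt (fun t : ℝ => Real.exp (-t)) (Real.exp (-t) * (-1)) t :=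
    (hasDerivAt_neg t).exp
  have := ((hexp.sub (sum_hasDerivAt k t)).const_mul ((-1 : ℝ) ^ (k + 1 + 1)))
  convert this using 1
  · rfl
  · rfl
  · rfl
  unfold Q
  rw [pow_succ]
  ring

lemma Q_zero_eq (k : ℕ) : Q (k + 1) 0 = 0 := by
  unfold Q
  rw [Finset.sum_range_succ']
  simp

lemma Q_pos (k : ℕ) : ∀ t : ℝ, 0 < t → 0 < Q k t := by
  induction k with
  | zero =>
    intro t ht
    have hq : Q 0 t = 1 - Real.exp (-t) := by
      simp [Q, Finset.sum_range_one]
    have : Real.exp (-t) < 1 := Real.exp_lt_one_iff.mpr (by linarith)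
    rw [hq]; linarith
  | succ k ih =>
    intro t ht
    have hmono : StrictMonoOn (Q (k + 1)) (Set.Ici 0) := by
      apply strictMonoOn_of_deriv_pos (convex_Ici 0) ((Q_continuous (k + 1)).continuousOn)
      intro x hx
      rw [interior_Ici] at hx
      rw [(Q_hasDerivAt k x).deriv]
      exact ih x hx
    have := hmono (Set.self_mem_Ici) (Set.mem_Ici.mpr ht.le) ht
    rwa [Q_zero_eq] at this

lemma Q_add_Q (k : ℕ) (t : ℝ) :
    Q k t + Q (k + 1) t = t ^ (k + 1) / (Nat.factorial (k + 1)) := by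
  have hc : ((-1 : ℝ) ^ (k + 1)) * ((-1 : ℝ) ^ (k + 1)) = 1 := by
    rw [← pow_add]; exact Even.neg_one_pow ⟨k + 1, rfl⟩
  unfold Q
  rw [Finset.sum_range_succ (n := k + 1), pow_succ (n := k + 1)]
  linear_combination (t ^ (k + 1) / (Nat.factorial (k + 1) : ℝ)) * hc

lemma Q_lt (k : ℕ) (t : ℝ) (ht : 0 < t) :
    Q k t < t ^ (k + 1) / (Nat.factorial (k + 1)) := by
  have := Q_add_Q k t
  have := Q_pos (k + 1) t ht
  linarith

lemma Q_le_of_one_le (k : ℕ) (t : ℝ) (ht : 1 ≤ t) : Q k t ≤ (k + 2) * t ^ k := by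
  have ht0 : 0 < t := lt_of_lt_of_le one_pos ht
  have habs : Q k t ≤ |Q k t| := le_abs_self _
  have h1 : |Q k t| ≤ Real.exp (-t) + ∑ j ∈ Finset.range (k + 1), t ^ j / (Nat.factorial j) := by
    unfold Q
    rw [abs_mul, abs_pow, abs_neg, abs_one, one_pow, one_mul]
    refine (abs_sub _ _).trans ?_
    gcongr
    · rw [abs_of_pos (Real.exp_pos _)]
    · refine (Finset.abs_sum_le_sum_abs _ _).trans_eq ?_
      apply Finset.sum_congr rfl
      intro j _
      rw [abs_div, abs_mul, abs_pow, abs_pow, abs_neg, abs_one, one_pow, one_mul,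
        abs_of_pos ht0, Nat.abs_cast]
  have h2 : ∑ j ∈ Finset.range (k + 1), t ^ j / (Nat.factorial j) ≤ (k + 1) * t ^ k := by
    calc ∑ j ∈ Finset.range (k + 1), t ^ j / (Nat.factorial j)
        ≤ ∑ j ∈ Finset.range (k + 1), t ^ k := by
          apply Finset.sum_le_sum
          intro j hj
          have hjk : j ≤ k := Nat.lt_succ_iff.mp (Finset.mem_range.mp hj)
          have : t ^ j ≤ t ^ k := pow_le_pow_right₀ ht hjk
          have hfac : (1 : ℝ) ≤ Nat.factorial j := by exact_mod_cast Nat.one_le_iff_ne_zero.mpr (Nat.factorial_ne_zero j)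
          calc t ^ j / (Nat.factorial j) ≤ t ^ j / 1 := by
                apply div_le_div_of_nonneg_left (by positivity) one_pos hfac
            _ = t ^ j := div_one _
            _ ≤ t ^ k := this
      _ = (k + 1) * t ^ k := by rw [Finset.sum_const, Finset.card_range]; push_cast; ring
  have h3 : Real.exp (-t) ≤ t ^ k := by
    calc Real.exp (-t) ≤ 1 := Real.exp_le_one_iff.mpr (by linarith)
      _ ≤ t ^ k := one_le_pow₀ ht
  calc Q k t ≤ |Q k t| := habs
    _ ≤ Real.exp (-t) + ∑ j ∈ Finset.range (k + 1), t ^ j / (Nat.factorial j) := h1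
    _ ≤ t ^ k + (k + 1) * t ^ k := by linarith
    _ = (k + 2) * t ^ k := by ring

/-- **Integral representation of power functions** (Lemma 3.1): for `k < p < k+1`,
`Q_k > 0` on `(0,∞)`, the integral `C_p = ∫₀^∞ Q_k(t) t^{-p-1} dt` converges to a positive
number, and `x^p = C_p⁻¹ ∫₀^∞ Q_k(tx) t^{-p-1} dt` for all `x > 0`. -/
theorem Qk_integral_representation (k : ℕ) (p : ℝ)
    (hk : (k : ℝ) < p) (hk' : p < k + 1) :
    (∀ t : ℝ, 0 < t → 0 < Q k t)
    ∧ IntegrableOn (fun t => Q k t * t ^ (-p - 1)) (Set.Ioi (0 : ℝ))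
    ∧ 0 < ∫ t in Set.Ioi (0 : ℝ), Q k t * t ^ (-p - 1)
    ∧ ∀ x : ℝ, 0 < x →
        x ^ p = (∫ t in Set.Ioi (0 : ℝ), Q k t * t ^ (-p - 1))⁻¹
          * ∫ t in Set.Ioi (0 : ℝ), Q k (t * x) * t ^ (-p - 1) := by
  set f : ℝ → ℝ := fun t => Q k t * t ^ (-p - 1) with hf
  have hmeas : ∀ s : Set ℝ, AEStronglyMeasurable f (volume.restrict s) := by
    intro s
    exact (((Q_continuous k).measurable).mul
      (measurable_id.pow measurable_const)).aestronglyMeasurable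
  -- positivity of f on Ioi 0
  have hfpos : ∀ t : ℝ, 0 < t → 0 < f t := by
    intro t ht
    exact mul_pos (Q_pos k t ht) (Real.rpow_pos_of_pos ht _)
  -- integrability on (0,1]
  have I1 : IntegrableOn f (Set.Ioc 0 1) := by
    have hg : IntegrableOn (fun t : ℝ => t ^ ((k : ℝ) - p) / (Nat.factorial (k + 1)))
        (Set.Ioc (0 : ℝ) 1) := by
      have := (intervalIntegral.intervalIntegrable_rpow' (a := 0) (b := 1)
        (r := (k : ℝ) - p) (by linarith)).div_const (Nat.factorial (k + 1) : ℝ)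
      rwa [intervalIntegrable_iff, Set.uIoc_of_le zero_le_one] at this
    apply Integrable.mono' hg (hmeas _)
    rw [ae_restrict_iff' measurableSet_Ioc]
    filter_upwards with t ht
    obtain ⟨ht0, _⟩ := ht
    have hQ : 0 < Q k t := Q_pos k t ht0
    rw [Real.norm_eq_abs, abs_of_pos (hfpos t ht0)]
    have hb : Q k t ≤ t ^ (k + 1) / (Nat.factorial (k + 1)) := (Q_lt k t ht0).le
    have : f t ≤ t ^ (k + 1) / (Nat.factorial (k + 1)) * t ^ (-p - 1) := by
      apply mul_le_mul_of_nonneg_right hb (Real.rpow_nonneg ht0.le _)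
    refine this.trans_eq ?_
    rw [div_mul_eq_mul_div, ← Real.rpow_natCast t (k + 1), ← Real.rpow_add ht0]
    congr 2
    push_cast; ring
  -- integrability on (1,∞)
  have I2 : IntegrableOn f (Set.Ioi 1) := by
    have hg : IntegrableOn (fun t : ℝ => ((k : ℝ) + 2) * t ^ ((k : ℝ) - p - 1))
        (Set.Ioi (1 : ℝ)) :=
      (integrableOn_Ioi_rpow_of_lt (by linarith) one_pos).const_mul _
    apply Integrable.mono' hg (hmeas _)
    rw [ae_restrict_iff' measurableSet_Ioi]
    filter_upwards with t ht
    rw [Set.mem_Ioi] at ht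
    have ht0 : 0 < t := lt_of_lt_of_le one_pos ht.le
    rw [Real.norm_eq_abs, abs_of_pos (hfpos t ht0)]
    have hb : Q k t ≤ ((k : ℝ) + 2) * t ^ k := Q_le_of_one_le k t ht.le
    have : f t ≤ ((k : ℝ) + 2) * t ^ k * t ^ (-p - 1) := by
      apply mul_le_mul_of_nonneg_right hb (Real.rpow_nonneg ht0.le _)
    refine this.trans_eq ?_
    rw [mul_assoc, ← Real.rpow_natCast t k, ← Real.rpow_add ht0]
    congr 2
    ring
  have hint : IntegrableOn f (Set.Ioi 0) := by
    rw [← Set.Ioc_union_Ioi_eq_Ioi (zero_le_one)]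
    exact I1.union I2
  -- positivity of the integral
  have hCpos : 0 < ∫ t in Set.Ioi (0 : ℝ), f t := by
    have hnn : 0 ≤ᵐ[volume.restrict (Set.Ioi (0:ℝ))] f := by
      refine (ae_restrict_iff' measurableSet_Ioi).mpr ?_
      filter_upwards with t ht
      exact (hfpos t ht).le
    rw [setIntegral_pos_iff_support_of_nonneg_ae hnn hint]
    refine lt_of_lt_of_le ?_ (measure_mono (fun t ht => ⟨ne_of_gt (hfpos t ht), ht⟩ :
      Set.Ioi (0:ℝ) ⊆ Function.support f ∩ Set.Ioi 0))
    simp [Real.volume_Ioi]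
  refine ⟨Q_pos k, hint, hCpos, ?_⟩
  intro x hx
  have hC : (∫ t in Set.Ioi (0 : ℝ), f t) ≠ 0 := ne_of_gt hCpos
  have key : ∫ t in Set.Ioi (0 : ℝ), Q k (t * x) * t ^ (-p - 1)
      = x ^ p * ∫ t in Set.Ioi (0 : ℝ), f t := by
    have step1 : ∫ t in Set.Ioi (0 : ℝ), Q k (t * x) * t ^ (-p - 1)
        = ∫ t in Set.Ioi (0 : ℝ), x ^ (p + 1) * f (t * x) := by
      apply setIntegral_congr_fun measurableSet_Ioi
      intro t ht
      rw [Set.mem_Ioi] at ht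
      simp only [hf]
      rw [Real.mul_rpow ht.le hx.le]
      rw [show x ^ (p+1) * (Q k (t*x) * (t ^ (-p-1) * x ^ (-p-1)))
        = Q k (t*x) * t ^ (-p-1) * (x ^ (p+1) * x ^ (-p-1)) from by ring,
        ← Real.rpow_add hx]
      norm_num
    rw [step1, integral_const_mul,
      MeasureTheory.integral_comp_mul_right_Ioi f 0 hx, zero_mul, smul_eq_mul,
      ← mul_assoc]
    congr 1
    rw [← Real.rpow_neg_one x, ← Real.rpow_add hx]
    congr 1
    ring
  rw [key, mul_comm (x ^ p), ← mul_assoc, inv_mul_cancel₀ hC, one_mul]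
end
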